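/- arXiv:2206.03172 — 2 statements merged into one kernel-verified Lean document; each statement's English description precedes it below -/
import Mathlib

section
/- Let (g, t) be a construction in a construction space matching a pattern (p, v), with embedding f : (g, t) → (p, v). Then: (1) if CTS(g, t) = [[a_{1,1},…,a_{j,1}],…,[a_{1,n},…,a_{k,n}]] then CTS(p, v) = [[f(a_{1,1}),…,f(a_{j,1})],…,[f(a_{1,n}),…,f(a_{k,n})]] (i.e. CTS(p, v) is the arrow-wise image under f of CTS(g, t)); (2) if Ft(g, t) = [t1,…,tn] then Ft(p, v) = [f(t1),…,f(tn)]; and (3) the foundation type-sequence Fy(g, t) is a specialisation of Fy(p, v). -/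
namespace RST

/-! ## Type systems -/

/-- A relation (given as a set of pairs) is a partial order on the set `Ty`. -/
def IsPartialOrderOn {U : Type*} (Ty : Set U) (le : Set (U × U)) : Prop :=
  (∀ p ∈ le, p.1 ∈ Ty ∧ p.2 ∈ Ty) ∧
  (∀ τ ∈ Ty, (τ, τ) ∈ le) ∧
  (∀ a b : U, (a, b) ∈ le → (b, a) ∈ le → a = b) ∧
  (∀ a b c : U, (a, b) ∈ le → (b, c) ∈ le → (a, c) ∈ le)

/-- The subtype closure of `Ty'` in the type system `(Ty, le)`. -/
def subtypeClosure {U : Type*} (Ty : Set U) (le : Set (U × U)) (Ty' : Set U) : Set U :=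
  {τ | τ ∈ Ty ∧ ∃ τ' ∈ Ty', (τ, τ') ∈ le}

/-- The set of all subtype closures of subsets of `Ty`. -/
def SC {U : Type*} (Ty : Set U) (le : Set (U × U)) : Set (Set U) :=
  {S | ∃ Ty' ⊆ Ty, S = subtypeClosure Ty le Ty'}

/-- The candidate order of an upper bound extension: the reflexive closure (on `Ty ∪ Tystar`)
of `le` together with the pairs `(τ, f S)` for `τ ∈ S ∈ SC Ty le`. -/
def upperBoundRel {U : Type*} (Ty Tystar : Set U) (le : Set (U × U)) (f : Set U → U) :
    Set (U × U) :=
  (le ∪ {p : U × U | ∃ S ∈ SC Ty le, p.1 ∈ S ∧ p.2 = f S}) ∪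
    {p : U × U | p.1 = p.2 ∧ p.1 ∈ Ty ∪ Tystar}

/-! ## Graphs -/

/-- A (raw) directed labelled bipartite graph: tokens `Tk`, configurators `Cf`, arrows `Arr`,
incidence, arrow indices and vertex labels all given relationally (as sets of pairs), so that
unions of graphs are componentwise unions. -/
structure PreGraph (V A L : Type*) where
  Tk : Set V
  Cf : Set V
  Arr : Set A
  inc : Set (A × (V × V))
  ia : Set (A × ℕ)
  tl : Set (V × L)
  cl : Set (V × L)

variable {V A L : Type*}

instance : Union (PreGraph V A L) :=
  ⟨fun g h =>
    ⟨g.Tk ∪ h.Tk, g.Cf ∪ h.Cf, g.Arr ∪ h.Arr, g.inc ∪ h.inc, g.ia ∪ h.ia,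
      g.tl ∪ h.tl, g.cl ∪ h.cl⟩⟩

def PreGraph.Subgraph (h g : PreGraph V A L) : Prop :=
  h.Tk ⊆ g.Tk ∧ h.Cf ⊆ g.Cf ∧ h.Arr ⊆ g.Arr ∧ h.inc ⊆ g.inc ∧ h.ia ⊆ g.ia ∧
    h.tl ⊆ g.tl ∧ h.cl ⊆ g.cl

/-- The vertices adjacent to `u` (together with `u`). -/
def PreGraph.adjTo (g : PreGraph V A L) (u : V) : Set V :=
  {u} ∪ {v | ∃ a ∈ g.Arr, (a, (v, u)) ∈ g.inc ∨ (a, (u, v)) ∈ g.inc}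

/-- The arrows incident to `u`. -/
def PreGraph.incidentArrows (g : PreGraph V A L) (u : V) : Set A :=
  {a | a ∈ g.Arr ∧ ∃ v, (a, (v, u)) ∈ g.inc ∨ (a, (u, v)) ∈ g.inc}

/-- The restriction of a graph to given vertex and arrow sets. -/
def PreGraph.restrict (g : PreGraph V A L) (Vs : Set V) (As : Set A) : PreGraph V A L :=
  ⟨g.Tk ∩ Vs, g.Cf ∩ Vs, g.Arr ∩ As, {q | q ∈ g.inc ∧ q.1 ∈ As},
    {q | q ∈ g.ia ∧ q.1 ∈ As}, {q | q ∈ g.tl ∧ q.1 ∈ Vs}, {q | q ∈ g.cl ∧ q.1 ∈ Vs}⟩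

/-- The neighbourhood of a vertex `u`. -/
def PreGraph.Nh (g : PreGraph V A L) (u : V) : PreGraph V A L :=
  g.restrict (g.adjTo u) (g.incidentArrows u)

/-- A set of pairs is (the graph of) a function with domain `D`. -/
def IsFunctionOn {α β : Type*} (R : Set (α × β)) (D : Set α) : Prop :=
  (∀ p ∈ R, p.1 ∈ D) ∧ ∀ x ∈ D, ∃! y, (x, y) ∈ R

/-- A raw graph is a genuine directed labelled bipartite graph. -/
def IsGraph (g : PreGraph V A L) : Prop :=
  Disjoint g.Tk g.Cf ∧
  IsFunctionOn g.inc g.Arr ∧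
  (∀ a v w, (a, (v, w)) ∈ g.inc → (v ∈ g.Tk ∧ w ∈ g.Cf) ∨ (v ∈ g.Cf ∧ w ∈ g.Tk)) ∧
  IsFunctionOn g.ia g.Arr ∧ IsFunctionOn g.tl g.Tk ∧ IsFunctionOn g.cl g.Cf

/-- `ars` is the list of incoming arrows of `u`, listed in increasing index order
(the arrow at position `i` carries index `i+1`). -/
def InArrowSeq (g : PreGraph V A L) (u : V) (ars : List A) : Prop :=
  ars.Nodup ∧ (∀ a : A, a ∈ ars ↔ a ∈ g.Arr ∧ ∃ w, (a, (w, u)) ∈ g.inc) ∧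
  ∀ (i : ℕ) (a : A), ars[i]? = some a → (a, i + 1) ∈ g.ia

/-- `t` is an output token of the configurator `u`. -/
def OutputTok (g : PreGraph V A L) (u t : V) : Prop :=
  ∃ a ∈ g.Arr, (a, (u, t)) ∈ g.inc

/-- `ts` is the input token-sequence of the configurator `u`. -/
def InputTokSeq (g : PreGraph V A L) (u : V) (ts : List V) : Prop :=
  ∃ ars : List A, InArrowSeq g u ars ∧
    List.Forall₂ (fun a v => (a, (v, u)) ∈ g.inc) ars ts

/-- `τs` is the input type-sequence of the configurator `u`. -/
def InputTypeSeq (g : PreGraph V A L) (u : V) (τs : List L) : Prop :=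
  ∃ ts : List V, InputTokSeq g u ts ∧ List.Forall₂ (fun v τ => (v, τ) ∈ g.tl) ts τs

/-- `g` is a configuration of the constructor `c` (with signature `(ins, out)`),
whose single configurator is `u`. -/
def IsConfiguration (le : Set (L × L)) (g : PreGraph V A L) (u : V) (c : L)
    (ins : List L) (out : L) : Prop :=
  IsGraph g ∧ g.Cf = {u} ∧ (u, c) ∈ g.cl ∧
  g.Tk = {v | ∃ a ∈ g.Arr, (a, (v, u)) ∈ g.inc ∨ (a, (u, v)) ∈ g.inc} ∧
  (∃! a0 : A, a0 ∈ g.Arr ∧ ∃ w, (a0, (u, w)) ∈ g.inc) ∧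
  (∀ a0 ∈ g.Arr, ∀ w : V, (a0, (u, w)) ∈ g.inc →
      (a0, 0) ∈ g.ia ∧ ∃ σ, (w, σ) ∈ g.tl ∧ (σ, out) ∈ le) ∧
  (∃ ars : List A, InArrowSeq g u ars ∧ ars.length = ins.length ∧
    ∀ (i : ℕ) (a : A) (τ : L), ars[i]? = some a → ins[i]? = some τ →
      ∃ w σ, (a, (w, u)) ∈ g.inc ∧ (w, σ) ∈ g.tl ∧ (σ, τ) ∈ le)

/-- A structure graph for the constructor specification `(C, sig)` over types `(Ty, le)`. -/
def IsStructureGraph (Ty : Set L) (le : Set (L × L)) (C : Set L)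
    (sig : Set (L × (List L × L))) (g : PreGraph V A L) : Prop :=
  IsGraph g ∧ (∀ x τ, (x, τ) ∈ g.tl → τ ∈ Ty) ∧
  ∀ u ∈ g.Cf, ∃ c ins out, (u, c) ∈ g.cl ∧ c ∈ C ∧ (c, (ins, out)) ∈ sig ∧
    IsConfiguration le (g.Nh u) u c ins out

/-! ## Construction spaces -/

/-- The raw data of a construction space: a type system, a constructor specification and
a structure graph. -/
structure CSpace (V A L : Type*) where
  Ty : Set L
  le : Set (L × L)
  C : Set L
  sig : Set (L × (List L × L))
  G : PreGraph V A L

instance : Union (CSpace V A L) :=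
  ⟨fun c d => ⟨c.Ty ∪ d.Ty, c.le ∪ d.le, c.C ∪ d.C, c.sig ∪ d.sig, c.G ∪ d.G⟩⟩

/-- The raw data forms a genuine construction space. -/
def IsCSpace (Cs : CSpace V A L) : Prop :=
  IsPartialOrderOn Cs.Ty Cs.le ∧ Disjoint Cs.C Cs.Ty ∧ IsFunctionOn Cs.sig Cs.C ∧
  (∀ c ins out, (c, (ins, out)) ∈ Cs.sig →
      ins ≠ [] ∧ (∀ τ ∈ ins, τ ∈ Cs.Ty) ∧ out ∈ Cs.Ty) ∧
  IsStructureGraph Cs.Ty Cs.le Cs.C Cs.sig Cs.G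

/-- Token-functionality of the constructors of a structure graph. -/
def TokenFunctional (g : PreGraph V A L) : Prop :=
  ∀ u u' c, u ∈ g.Cf → u' ∈ g.Cf → (u, c) ∈ g.cl → (u', c) ∈ g.cl →
    ∀ ts, InputTokSeq g u ts → InputTokSeq g u' ts →
      ∀ t t', OutputTok g u t → OutputTok g u' t' → t = t'

/-- Type-functionality of the constructors of a structure graph. -/
def TypeFunctional (g : PreGraph V A L) : Prop :=
  ∀ u u' c, u ∈ g.Cf → u' ∈ g.Cf → (u, c) ∈ g.cl → (u', c) ∈ g.cl →
    ∀ τs, InputTypeSeq g u τs → InputTypeSeq g u' τs →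
      ∀ t t' τ τ', OutputTok g u t → OutputTok g u' t' →
        (t, τ) ∈ g.tl → (t', τ') ∈ g.tl → τ = τ'

def IsFunctionalGraph (g : PreGraph V A L) : Prop :=
  TokenFunctional g ∧ TypeFunctional g

/-! ## Representational systems -/

/-- The raw data of a representational system: grammatical, entailment and identification
spaces. -/
structure RSystem (V A L : Type*) where
  Gs : CSpace V A L
  Es : CSpace V A L
  Is : CSpace V A L

instance : Union (RSystem V A L) :=
  ⟨fun r s => ⟨r.Gs ∪ s.Gs, r.Es ∪ s.Es, r.Is ∪ s.Is⟩⟩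

/-- The universal space of a representational system. -/
def RSystem.uspace (R : RSystem V A L) : CSpace V A L := (R.Gs ∪ R.Es) ∪ R.Is

/-- `R` is a representational system formed over the type system `(Ty, le)` and the
meta-type system `(MTy, Mle)`. -/
def IsRSystem (R : RSystem V A L) (Ty : Set L) (le : Set (L × L))
    (MTy : Set L) (Mle : Set (L × L)) : Prop :=
  IsPartialOrderOn Ty le ∧ IsPartialOrderOn MTy Mle ∧
  IsPartialOrderOn (Ty ∪ MTy) (le ∪ Mle) ∧
  R.Gs.Ty = Ty ∧ R.Gs.le = le ∧ IsCSpace R.Gs ∧ IsFunctionalGraph R.Gs.G ∧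
  R.Es.Ty = Ty ∧ R.Es.le = le ∧ IsCSpace R.Es ∧ R.Es.G.Tk ⊆ R.Gs.G.Tk ∧
  R.Is.Ty = Ty ∪ MTy ∧ R.Is.le = le ∪ Mle ∧ IsCSpace R.Is ∧
  (∀ x ∈ R.Is.G.Tk, x ∉ R.Gs.G.Tk → ∃ τ ∈ MTy, (x, τ) ∈ R.Is.G.tl) ∧
  (∀ x ∈ R.Is.G.Tk, (∃ u ∈ R.Is.G.Cf, OutputTok R.Is.G u x) → x ∉ R.Gs.G.Tk) ∧
  IsCSpace (R.Gs ∪ R.Es) ∧ IsCSpace (R.Gs ∪ R.Is) ∧ IsCSpace (R.Es ∪ R.Is) ∧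
  Disjoint R.Gs.C R.Es.C ∧ Disjoint R.Gs.C R.Is.C ∧ Disjoint R.Es.C R.Is.C

/-- `(R, R', Is'')` is an inter-representational-system encoding, where `R` is formed over
`(Ty, le)` and `(MTy, Mle)`, `R'` over `(Ty', le')` and `(MTy', Mle')`, and `Is''` is an
identification space formed over `(Ty ∪ Ty', le ∪ le')` and `(MTy'', Mle'')`. -/
def IsIRSE (R R' : RSystem V A L) (Is'' : CSpace V A L)
    (Ty : Set L) (le : Set (L × L)) (MTy : Set L) (Mle : Set (L × L))
    (Ty' : Set L) (le' : Set (L × L)) (MTy' : Set L) (Mle' : Set (L × L))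
    (MTy'' : Set L) (Mle'' : Set (L × L)) : Prop :=
  IsRSystem R Ty le MTy Mle ∧ IsRSystem R' Ty' le' MTy' Mle' ∧
  IsRSystem (R ∪ R') (Ty ∪ Ty') (le ∪ le') (MTy ∪ MTy') (Mle ∪ Mle') ∧
  IsPartialOrderOn MTy'' Mle'' ∧
  IsPartialOrderOn ((Ty ∪ Ty') ∪ MTy'') ((le ∪ le') ∪ Mle'') ∧
  Is''.Ty = (Ty ∪ Ty') ∪ MTy'' ∧ Is''.le = (le ∪ le') ∪ Mle'' ∧ IsCSpace Is'' ∧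
  MTy ∪ MTy' ⊆ MTy'' ∧ Mle ∪ Mle' ⊆ Mle'' ∧
  (∀ x ∈ Is''.G.Tk, x ∉ (R.Gs ∪ R'.Gs).G.Tk → ∃ τ ∈ MTy'', (x, τ) ∈ Is''.G.tl) ∧
  (∀ x ∈ Is''.G.Tk, (∃ u ∈ Is''.G.Cf, OutputTok Is''.G u x) →
      x ∉ (R.Gs ∪ R'.Gs).G.Tk) ∧
  IsCSpace ((R.Gs ∪ R'.Gs) ∪ Is'') ∧ IsCSpace ((R.Es ∪ R'.Es) ∪ Is'') ∧
  IsCSpace ((R.Is ∪ R'.Is) ∪ Is'') ∧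
  Disjoint Is''.C (R.Gs ∪ R'.Gs).C ∧ Disjoint Is''.C (R.Es ∪ R'.Es).C ∧
  Disjoint Is''.C (R.Is ∪ R'.Is).C

/-! ## Trails -/

/-- A trail candidate: a list of arrows together with an associated source and target vertex
(needed for the empty trail `[]_v`). -/
structure Trail (V A : Type*) where
  arrows : List A
  src : V
  tgt : V

/-- The empty trail `[]_v`. -/
def Trail.nil {V A : Type*} (v : V) : Trail V A := ⟨[], v, v⟩

/-- Concatenation `e ⊕ w` of trails. -/
def Trail.append {V A : Type*} (e w : Trail V A) : Trail V A :=
  ⟨e.arrows ++ w.arrows, e.src, w.tgt⟩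

/-- The image of a trail under vertex/arrow maps. -/
def Trail.map {V A : Type*} (fv : V → V) (fa : A → A) (tr : Trail V A) : Trail V A :=
  ⟨tr.arrows.map fa, fv tr.src, fv tr.tgt⟩

/-- The arrows chain through the graph from `s` to `t`. -/
def ChainIn (g : PreGraph V A L) : List A → V → V → Prop
  | [], s, t => s = t
  | a :: rest, s, t => a ∈ g.Arr ∧ ∃ m, (a, (s, m)) ∈ g.inc ∧ ChainIn g rest m t

/-- `tr` is a trail in `g`. -/
def IsTrailIn (g : PreGraph V A L) (tr : Trail V A) : Prop :=
  tr.arrows.Nodup ∧ ChainIn g tr.arrows tr.src tr.tgt ∧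
  tr.src ∈ g.Tk ∪ g.Cf ∧ tr.tgt ∈ g.Tk ∪ g.Cf

/-- A trail is well-formed provided its source and target are tokens. -/
def WellFormed (g : PreGraph V A L) (tr : Trail V A) : Prop :=
  tr.src ∈ g.Tk ∧ tr.tgt ∈ g.Tk

/-- `tr` is (source-)extendable by the arrow `a`. -/
def ExtendableBy (g : PreGraph V A L) (tr : Trail V A) (a : A) : Prop :=
  a ∈ g.Arr ∧ a ∉ tr.arrows ∧ ∃ s, (a, (s, tr.src)) ∈ g.inc

def Extendable (g : PreGraph V A L) (tr : Trail V A) : Prop :=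
  ∃ a, ExtendableBy g tr a

def NonExtendable (g : PreGraph V A L) (tr : Trail V A) : Prop :=
  ¬ Extendable g tr

/-- `TES g tr S` holds iff `S` is the trail extension sequence of the trail `tr` in `g`,
following the recursive definition of TES. -/
inductive TES (g : PreGraph V A L) : Trail V A → List (Trail V A) → Prop where
  | nonext (tr : Trail V A) (h : NonExtendable g tr) :
      TES g tr [⟨[], tr.src, tr.src⟩]
  | ext (tr : Trail V A) (a : A) (u : V) (ars : List A)
      (Ss : List (List (Trail V A)))
      (hext : ExtendableBy g tr a)
      (hinc : (a, (u, tr.src)) ∈ g.inc)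
      (hars : InArrowSeq g u ars)
      (hlen : Ss.length = ars.length)
      (hrec : ∀ (i : ℕ) (ai : A) (si : V) (Si : List (Trail V A)),
          ars[i]? = some ai → Ss[i]? = some Si → (ai, (si, u)) ∈ g.inc →
          TES g ⟨ai :: a :: tr.arrows, si, tr.tgt⟩ Si) :
      TES g tr (List.flatten (List.zipWith
        (fun (ai : A) (Si : List (Trail V A)) =>
          Si.map (fun e => (⟨e.arrows ++ [ai, a], e.src, tr.src⟩ : Trail V A)))
        ars Ss))

/-- The sequence of sources of a sequence of trails. -/
def srcSeq {V A : Type*} (S : List (Trail V A)) : List V := S.map Trail.src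

/-- The right product `S ◁ w`, appending the trail `w` to each trail in `S`. -/
def rprod {V A : Type*} (S : List (Trail V A)) (w : Trail V A) : List (Trail V A) :=
  S.map fun e => e.append w

/-! ## Constructions -/

/-- Every token is the target of at most one arrow. -/
def UniStructured (g : PreGraph V A L) : Prop :=
  ∀ x ∈ g.Tk, ∀ a ∈ g.Arr, ∀ b ∈ g.Arr,
    (∃ w, (a, (w, x)) ∈ g.inc) → (∃ w, (b, (w, x)) ∈ g.inc) → a = b

/-- `(g, t)` is a construction in the construction space `Cs`: `g` is a finite uni-structured
structure graph (a subgraph of the structure graph of `Cs`), `t` is a token of `g`, and every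
vertex of `g` is the source of a trail targeting `t`. -/
def IsConstruction (Cs : CSpace V A L) (g : PreGraph V A L) (t : V) : Prop :=
  g.Subgraph Cs.G ∧ IsStructureGraph Cs.Ty Cs.le Cs.C Cs.sig g ∧
  g.Tk.Finite ∧ g.Cf.Finite ∧ g.Arr.Finite ∧ UniStructured g ∧ t ∈ g.Tk ∧
  ∀ v ∈ g.Tk ∪ g.Cf, ∃ tr : Trail V A, IsTrailIn g tr ∧ tr.src = v ∧ tr.tgt = t

/-- `(g, t)` is a construction *in* `Cs` in the strong sense: moreover every configurator of `g`
has its full neighbourhood from the structure graph of `Cs`. -/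
def IsConstructionIn (Cs : CSpace V A L) (g : PreGraph V A L) (t : V) : Prop :=
  IsConstruction Cs g t ∧ ∀ u ∈ g.Cf, g.Nh u = Cs.G.Nh u

/-- A trivial construction: the construct is its only vertex. -/
def TrivialC (g : PreGraph V A L) (t : V) : Prop := g.Tk ∪ g.Cf = {t}

/-- A basic construction: exactly one configurator. -/
def BasicC (g : PreGraph V A L) : Prop := ∃ u, g.Cf = {u}

/-- The set of arrows occurring in a sequence of trails. -/
def trailArrowSet {V A : Type*} (TR : List (Trail V A)) : Set A :=
  {a | ∃ tr ∈ TR, a ∈ tr.arrows}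

/-- The vertices of the `TR`-graph: vertices incident to arrows of trails of `TR`,
together with the associated vertex of any empty trail of `TR`. -/
def trailVertexSet (g : PreGraph V A L) (TR : List (Trail V A)) : Set V :=
  {v | (∃ a ∈ trailArrowSet TR, ∃ w, (a, (v, w)) ∈ g.inc ∨ (a, (w, v)) ∈ g.inc) ∨
    ∃ tr ∈ TR, tr.arrows = [] ∧ tr.src = v}

/-- The `TR`-graph `v(TR)`. -/
def trGraph (g : PreGraph V A L) (TR : List (Trail V A)) : PreGraph V A L :=
  g.restrict (trailVertexSet g TR) (trailArrowSet TR)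

/-- `((g', t), ics)` is a split of the construction `(g, t)`: `(g', t)` is a generator and
`ics` is the corresponding induced construction sequence (each induced construction is
`(v(TES(tri)), source(tri))`, the TES being computed in `(g, t)`). -/
def IsSplit (Cs : CSpace V A L) (g : PreGraph V A L) (t : V)
    (g' : PreGraph V A L) (ics : List (PreGraph V A L × V)) : Prop :=
  IsConstruction Cs g' t ∧ g'.Subgraph g ∧
  ∃ trs : List (Trail V A), TES g' (Trail.nil t) trs ∧ ics.length = trs.length ∧
    ∀ (i : ℕ) (tri : Trail V A), trs[i]? = some tri →
      ∃ Si : List (Trail V A), TES g tri Si ∧ ics[i]? = some (trGraph g Si, tri.src)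

/-! ## Decompositions -/

/-- A decomposition tree: vertices labelled by a graph and a token, with the incoming arrows
of every vertex given in index order by a list of subtrees. -/
inductive DTree (V A L : Type*) where
  | node : PreGraph V A L → V → List (DTree V A L) → DTree V A L

def DTree.rootGraph : DTree V A L → PreGraph V A L
  | .node g _ _ => g

def DTree.rootTok : DTree V A L → V
  | .node _ t _ => t

def DTree.kids : DTree V A L → List (DTree V A L)
  | .node _ _ cs => cs

/-- `IsDecompositionOf Cs D g t` holds iff `D` is a decomposition of the construction
`(g, t)` in `Cs`. -/
inductive IsDecompositionOf (Cs : CSpace V A L) : DTree V A L → PreGraph V A L → V → Prop where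
  | single (g : PreGraph V A L) (t : V) (h : IsConstruction Cs g t) :
      IsDecompositionOf Cs (.node g t []) g t
  | split (g : PreGraph V A L) (t : V) (g' : PreGraph V A L)
      (ics : List (PreGraph V A L × V)) (cs : List (DTree V A L))
      (hc : IsConstruction Cs g t)
      (hsplit : IsSplit Cs g t g' ics)
      (hlen : cs.length = ics.length)
      (hrec : ∀ (i : ℕ) (ci : DTree V A L) (gi : PreGraph V A L) (ti : V),
          cs[i]? = some ci → ics[i]? = some (gi, ti) → IsDecompositionOf Cs ci gi ti) :
      IsDecompositionOf Cs (.node g' t cs) g t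

/-- `LcsRel D ls` holds iff `ls` is the leaf construction-sequence of `D`. -/
inductive LcsRel : DTree V A L → List (PreGraph V A L × V) → Prop where
  | leaf (g : PreGraph V A L) (t : V) : LcsRel (.node g t []) [(g, t)]
  | node (g : PreGraph V A L) (t : V) (cs : List (DTree V A L))
      (ls : List (List (PreGraph V A L × V)))
      (hne : cs ≠ []) (hlen : ls.length = cs.length)
      (h : ∀ (i : ℕ) (ci : DTree V A L) (li : List (PreGraph V A L × V)),
          cs[i]? = some ci → ls[i]? = some li → LcsRel ci li) :
      LcsRel (.node g t cs) ls.flatten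

/-- `(p, w)` is one of the constructions labelling a vertex of the decomposition tree. -/
inductive LabelOf : DTree V A L → PreGraph V A L → V → Prop where
  | root (g : PreGraph V A L) (t : V) (cs : List (DTree V A L)) :
      LabelOf (.node g t cs) g t
  | child (g : PreGraph V A L) (t : V) (cs : List (DTree V A L))
      (c : DTree V A L) (p : PreGraph V A L) (w : V) :
      c ∈ cs → LabelOf c p w → LabelOf (.node g t cs) p w

/-- The union of all the graphs labelling vertices of the decomposition tree
(the graph of the construction `ct(D)` of the decomposition `D`). -/
def DTree.ctGraph (D : DTree V A L) : PreGraph V A L :=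
  ⟨{x | ∃ p w, LabelOf D p w ∧ x ∈ p.Tk},
   {x | ∃ p w, LabelOf D p w ∧ x ∈ p.Cf},
   {a | ∃ p w, LabelOf D p w ∧ a ∈ p.Arr},
   {q | ∃ p w, LabelOf D p w ∧ q ∈ p.inc},
   {q | ∃ p w, LabelOf D p w ∧ q ∈ p.ia},
   {q | ∃ p w, LabelOf D p w ∧ q ∈ p.tl},
   {q | ∃ p w, LabelOf D p w ∧ q ∈ p.cl}⟩

/-- Every vertex label of the decomposition tree satisfies `P`. -/
inductive AllLabels (P : PreGraph V A L → V → Prop) : DTree V A L → Prop where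
  | node (g : PreGraph V A L) (t : V) (cs : List (DTree V A L)) :
      P g t → (∀ c, c ∈ cs → AllLabels P c) → AllLabels P (.node g t cs)

/-- The subtree of a decomposition tree at a given position (a path of child indices). -/
def subtreeAt : List ℕ → DTree V A L → Option (DTree V A L)
  | [], D => some D
  | i :: rest, .node _ _ cs =>
    match cs[i]? with
    | some c => subtreeAt rest c
    | none => none

/-! ## Patterns and embeddings -/

/-- An embedding of the graph `g` into the graph `p`: an isomorphism preserving arrow indices
and configurator labels, with token labels respecting the subtype relation `le`. -/
def IsEmbedding (le : Set (L × L)) (g p : PreGraph V A L) (fv : V → V) (fa : A → A) : Prop :=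
  (∀ x ∈ g.Tk, fv x ∈ p.Tk) ∧ (∀ x ∈ g.Cf, fv x ∈ p.Cf) ∧
  (∀ x ∈ g.Tk ∪ g.Cf, ∀ y ∈ g.Tk ∪ g.Cf, fv x = fv y → x = y) ∧
  (∀ y ∈ p.Tk, ∃ x ∈ g.Tk, fv x = y) ∧ (∀ y ∈ p.Cf, ∃ x ∈ g.Cf, fv x = y) ∧
  (∀ a ∈ g.Arr, fa a ∈ p.Arr) ∧
  (∀ a ∈ g.Arr, ∀ b ∈ g.Arr, fa a = fa b → a = b) ∧
  (∀ b ∈ p.Arr, ∃ a ∈ g.Arr, fa a = b) ∧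
  (∀ a v w, (a, (v, w)) ∈ g.inc → (fa a, (fv v, fv w)) ∈ p.inc) ∧
  (∀ a n, (a, n) ∈ g.ia → (fa a, n) ∈ p.ia) ∧
  (∀ u c, (u, c) ∈ g.cl → (fv u, c) ∈ p.cl) ∧
  (∀ x τ, (x, τ) ∈ g.tl → ∃ σ, (fv x, σ) ∈ p.tl ∧ (τ, σ) ∈ le)

/-- The construction `(g, t)` matches the pattern `(p, v)`. -/
def MatchesPattern (le : Set (L × L)) (g : PreGraph V A L) (t : V)
    (p : PreGraph V A L) (v : V) : Prop :=
  ∃ fv fa, IsEmbedding le g p fv fa ∧ fv t = v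

/-- `Ps` is a pattern space for `Cs`: a construction space over the same type system and
constructor specification such that every construction of `Cs` matches some construction
of `Ps`. -/
def IsPatternSpace (Cs Ps : CSpace V A L) : Prop :=
  Ps.Ty = Cs.Ty ∧ Ps.le = Cs.le ∧ Ps.C = Cs.C ∧ Ps.sig = Cs.sig ∧ IsCSpace Ps ∧
  ∀ g t, IsConstruction Cs g t →
    ∃ p v, IsConstruction Ps p v ∧ MatchesPattern Cs.le g t p v

/-- Vertex-wise matching of two same-shape decomposition trees under a common pair of maps. -/
inductive DMatches (le : Set (L × L)) (fv : V → V) (fa : A → A) :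
    DTree V A L → DTree V A L → Prop where
  | node (g : PreGraph V A L) (t : V) (p : PreGraph V A L) (v : V)
      (cs ds : List (DTree V A L))
      (hemb : IsEmbedding le g p fv fa) (ht : fv t = v)
      (hlen : cs.length = ds.length)
      (hrec : ∀ (i : ℕ) (ci di : DTree V A L), cs[i]? = some ci → ds[i]? = some di →
          DMatches le fv fa ci di) :
      DMatches le fv fa (.node g t cs) (.node p v ds)

/-- The decomposition `D` matches the (pattern) decomposition `Δ`: there is an arrow-index
preserving isomorphism of trees together with an embedding of `ct(D)` into `ct(Δ)` whose
restriction to each vertex label is an embedding into the corresponding pattern label. -/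
def DecompositionMatches (le : Set (L × L)) (D Δ : DTree V A L) : Prop :=
  ∃ fv fa, IsEmbedding le D.ctGraph Δ.ctGraph fv fa ∧ fv D.rootTok = Δ.rootTok ∧
    DMatches le fv fa D Δ

/-! ## Descriptions -/

/-- A description: a set of decompositions of patterns (constructions in the pattern
space `Ps`). -/
def IsDescriptionOf (Ps : CSpace V A L) (Ds : Set (DTree V A L)) : Prop :=
  ∀ Δ ∈ Ds, ∃ p v, IsConstruction Ps p v ∧ IsDecompositionOf Ps Δ p v

/-- The description `Ds` is complete for `Cs`. -/
def CompleteDescription (Cs : CSpace V A L) (Ds : Set (DTree V A L)) : Prop :=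
  ∀ g t, IsConstruction Cs g t →
    ∃ Δ ∈ Ds, ∃ D, IsDecompositionOf Cs D g t ∧ DecompositionMatches Cs.le D Δ

/-- The set of patterns labelling vertices of decompositions in `Ds`. -/
def PatternsOf (Ds : Set (DTree V A L)) : Set (PreGraph V A L × V) :=
  {pv | ∃ Δ ∈ Ds, LabelOf Δ pv.1 pv.2}

/-- Label-preserving isomorphism of patterns/constructions. -/
def LabelIsomorphic (g : PreGraph V A L) (t : V) (p : PreGraph V A L) (v : V) : Prop :=
  ∃ fv fa, IsEmbedding {q : L × L | q.1 = q.2} g p fv fa ∧ fv t = v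

/-- The description `Ds` is compact: finitely many patterns up to label-preserving
isomorphism. -/
def CompactDescription (Ds : Set (DTree V A L)) : Prop :=
  ∃ Reps : Set (PreGraph V A L × V), Reps.Finite ∧
    ∀ pv ∈ PatternsOf Ds, ∃ qw ∈ Reps, LabelIsomorphic pv.1 pv.2 qw.1 qw.2

/-! ## Transformation constraints and structural transformations -/

/-- A transformation-constraint-shaped triple: two patterns (or constructions) together with
a set of patterns (or constructions). -/
structure TConstraint (V A L : Type*) where
  pa : PreGraph V A L
  ca : V
  pb : PreGraph V A L
  cb : V
  Pc : Set (PreGraph V A L × V)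

/-- The union of the graphs of a set of patterns. -/
def pGraph (P : Set (PreGraph V A L × V)) : PreGraph V A L :=
  ⟨{x | ∃ pv ∈ P, x ∈ pv.1.Tk}, {x | ∃ pv ∈ P, x ∈ pv.1.Cf},
   {a | ∃ pv ∈ P, a ∈ pv.1.Arr}, {q | ∃ pv ∈ P, q ∈ pv.1.inc},
   {q | ∃ pv ∈ P, q ∈ pv.1.ia}, {q | ∃ pv ∈ P, q ∈ pv.1.tl},
   {q | ∃ pv ∈ P, q ∈ pv.1.cl}⟩

/-- A respectful embedding of the set of patterns `P` into the set of patterns `P'`. -/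
def RespectfulEmbedding (le : Set (L × L)) (P P' : Set (PreGraph V A L × V))
    (fv : V → V) (fa : A → A) : Prop :=
  IsEmbedding le (pGraph P) (pGraph P') fv fa ∧
  ∀ pv ∈ P, ∃ qw ∈ P', IsEmbedding le pv.1 qw.1 fv fa ∧ fv pv.2 = qw.2

/-- Satisfaction of one transformation-constraint-shaped triple by another: embeddings of the
first two components, a respectful embedding of the third, whose common underlying maps give
an isomorphism of the unions of the graphs. -/
def TCSatisfies (le : Set (L × L)) (s s' : TConstraint V A L) : Prop :=
  ∃ fv fa,
    IsEmbedding le s.pa s'.pa fv fa ∧ fv s.ca = s'.ca ∧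
    IsEmbedding le s.pb s'.pb fv fa ∧ fv s.cb = s'.cb ∧
    RespectfulEmbedding le s.Pc s'.Pc fv fa ∧
    IsEmbedding le ((s.pa ∪ s.pb) ∪ pGraph s.Pc) ((s'.pa ∪ s'.pb) ∪ pGraph s'.Pc) fv fa

/-- A transformation constraint for an encoding described by `(Ds, Ds', P'')`. -/
def IsTransformationConstraint (Ds Ds' : Set (DTree V A L))
    (P'' : Set (PreGraph V A L × V)) (s : TConstraint V A L) : Prop :=
  (s.pa, s.ca) ∈ PatternsOf Ds ∧ (s.pb, s.cb) ∈ PatternsOf Ds' ∧ s.Pc ⊆ P''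

/-- A constraint assignment for `Δ` and `Δ'`: a partial function (modelled with `Option`) on
pairs of vertices (paths) whose values are transformation constraints from `S0` matched by the
corresponding labels. -/
def IsConstraintAssignment (leR leR' : Set (L × L)) (S0 : Set (TConstraint V A L))
    (Δ Δ' : DTree V A L) (Lm : List ℕ → List ℕ → Option (TConstraint V A L)) : Prop :=
  ∀ pi pi' s, Lm pi pi' = some s → s ∈ S0 ∧
    (∃ δ, subtreeAt pi Δ = some δ ∧
        MatchesPattern leR δ.rootGraph δ.rootTok s.pa s.ca) ∧
    (∃ δ', subtreeAt pi' Δ' = some δ' ∧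
        MatchesPattern leR' δ'.rootGraph δ'.rootTok s.pb s.cb)

/-- The constraint assignment `Lm` is satisfied by the pair of decompositions `(D, D')`
(whose vertices correspond, via the shape-preserving matchings, to those of `Δ`, `Δ'`). -/
def LSatisfiedBy (leI : Set (L × L)) (Ip : CSpace V A L)
    (Lm : List ℕ → List ℕ → Option (TConstraint V A L)) (D D' : DTree V A L) : Prop :=
  ∀ pi pi' s d d', Lm pi pi' = some s →
    subtreeAt pi D = some d → subtreeAt pi' D' = some d' →
    ∃ Cset : Set (PreGraph V A L × V),
      (∀ pv ∈ Cset, IsConstruction Ip pv.1 pv.2) ∧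
      TCSatisfies leI ⟨d.rootGraph, d.rootTok, d'.rootGraph, d'.rootTok, Cset⟩ s

/-- `(g', t')` is a structural `L`-transformation of `(g, t)` (with respect to the pattern
decompositions `Δ`, `Δ'` for the universal spaces `Ru`, `Ru'` and the inter-property
identification space `Ip`). -/
def IsStructuralLTransformation (Ru Ru' Ip : CSpace V A L) (Δ Δ' : DTree V A L)
    (Lm : List ℕ → List ℕ → Option (TConstraint V A L))
    (g : PreGraph V A L) (t : V) (g' : PreGraph V A L) (t' : V) : Prop :=
  (∃ D, IsDecompositionOf Ru D g t ∧ DecompositionMatches Ru.le D Δ) ∧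
  (∃ D', IsDecompositionOf Ru' D' g' t' ∧ DecompositionMatches Ru'.le D' Δ') ∧
  ∀ D D', IsDecompositionOf Ru D g t → DecompositionMatches Ru.le D Δ →
    IsDecompositionOf Ru' D' g' t' → DecompositionMatches Ru'.le D' Δ' →
    LSatisfiedBy Ip.le Ip Lm D D'

/-- Partial satisfaction: the constraint is only checked at vertices of the pattern
decomposition `Δh` whose label is already a construction in `Ru'`. -/
def LPartialSatisfiedBy (leI : Set (L × L)) (Ip Ru' : CSpace V A L)
    (Lm : List ℕ → List ℕ → Option (TConstraint V A L)) (D Δh : DTree V A L) : Prop :=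
  ∀ pi pi' s d δh, Lm pi pi' = some s →
    subtreeAt pi D = some d → subtreeAt pi' Δh = some δh →
    IsConstructionIn Ru' δh.rootGraph δh.rootTok →
    ∃ Cset : Set (PreGraph V A L × V),
      (∀ pv ∈ Cset, IsConstruction Ip pv.1 pv.2) ∧
      TCSatisfies leI ⟨d.rootGraph, d.rootTok, δh.rootGraph, δh.rootTok, Cset⟩ s

/-- The pattern `(ph, vh)` (a construction in the pattern space `Ps'` for `Ru'`) is a partial
`L`-transformation of the construction `(g, t)`. -/
def IsPartialLTransformation (Ru Ru' Ip Ps' : CSpace V A L) (Δ Δ' : DTree V A L)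
    (Lm : List ℕ → List ℕ → Option (TConstraint V A L))
    (g : PreGraph V A L) (t : V) (ph : PreGraph V A L) (vh : V) : Prop :=
  (∃ D, IsDecompositionOf Ru D g t ∧ DecompositionMatches Ru.le D Δ) ∧
  (∃ Δh, IsDecompositionOf Ps' Δh ph vh ∧ DecompositionMatches Ru'.le Δh Δ') ∧
  ∀ D Δh, IsDecompositionOf Ru D g t → DecompositionMatches Ru.le D Δ →
    IsDecompositionOf Ps' Δh ph vh → DecompositionMatches Ru'.le Δh Δ' →
    LPartialSatisfiedBy Ip.le Ip Ru' Lm D Δh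

/-! ## Validity, soundness, leaf instantiation -/

/-- Validity of `Lm` for `(g, t)` and `(p, v)` at the pair of vertices `(pi, pi')`. -/
def ValidAt (Ru Ru' Ip Ps' : CSpace V A L) (Δ Δ' : DTree V A L)
    (Lm : List ℕ → List ℕ → Option (TConstraint V A L))
    (g : PreGraph V A L) (t : V) (p : PreGraph V A L) (v : V)
    (pi pi' : List ℕ) : Prop :=
  ∀ D Δh Dsub Δhsub Δsub Δsub',
    IsDecompositionOf Ru D g t → DecompositionMatches Ru.le D Δ →
    IsDecompositionOf Ps' Δh p v → DecompositionMatches Ru'.le Δh Δ' →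
    subtreeAt pi D = some Dsub → subtreeAt pi' Δh = some Δhsub →
    subtreeAt pi Δ = some Δsub → subtreeAt pi' Δ' = some Δsub' →
    IsConstructionIn Ru' Δhsub.ctGraph Δhsub.rootTok →
    IsStructuralLTransformation Ru Ru' Ip Δsub Δsub'
      (fun σ σ' => Lm (pi ++ σ) (pi' ++ σ'))
      Dsub.ctGraph Dsub.rootTok Δhsub.ctGraph Δhsub.rootTok

/-- Ancestor-validity: validity at every pair of proper descendants-in-the-tree
("ancestors" in the paper's in-tree terminology). -/
def AncestorValidAt (Ru Ru' Ip Ps' : CSpace V A L) (Δ Δ' : DTree V A L)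
    (Lm : List ℕ → List ℕ → Option (TConstraint V A L))
    (g : PreGraph V A L) (t : V) (p : PreGraph V A L) (v : V)
    (pi pi' : List ℕ) : Prop :=
  ∀ σ σ' : List ℕ, σ ≠ [] → σ' ≠ [] →
    (∃ d, subtreeAt (pi ++ σ) Δ = some d) → (∃ d', subtreeAt (pi' ++ σ') Δ' = some d') →
    ValidAt Ru Ru' Ip Ps' Δ Δ' Lm g t p v (pi ++ σ) (pi' ++ σ')

/-- Soundness of a constraint assignment. -/
def SoundAssignment (Ru Ru' Ip Ps' : CSpace V A L) (Δ Δ' : DTree V A L)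
    (Lm : List ℕ → List ℕ → Option (TConstraint V A L)) : Prop :=
  ∀ g t, IsConstructionIn Ru g t →
    (∃ D, IsDecompositionOf Ru D g t ∧ DecompositionMatches Ru.le D Δ) →
    ∀ p v, IsConstruction Ps' p v →
      (∃ Δh, IsDecompositionOf Ps' Δh p v ∧ DecompositionMatches Ru'.le Δh Δ') →
      ∀ pi pi', (∃ d, subtreeAt pi Δ = some d) → (∃ d', subtreeAt pi' Δ' = some d') →
        AncestorValidAt Ru Ru' Ip Ps' Δ Δ' Lm g t p v pi pi' →
        ValidAt Ru Ru' Ip Ps' Δ Δ' Lm g t p v pi pi'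

/-- The pattern `(p, v)` leaf-instantiates `Δ'`: it matches `Δ'` and every leaf of its
`Δ'`-canonical decomposition is labelled by a construction in `Ru'`. -/
def LeafInstantiates (Ru' Ps' : CSpace V A L) (Δ' : DTree V A L)
    (p : PreGraph V A L) (v : V) : Prop :=
  (∃ Δh, IsDecompositionOf Ps' Δh p v ∧ DecompositionMatches Ru'.le Δh Δ') ∧
  ∀ Δh, IsDecompositionOf Ps' Δh p v → DecompositionMatches Ru'.le Δh Δ' →
    ∀ pi δh, subtreeAt pi Δh = some δh → δh.kids = [] →
      IsConstructionIn Ru' δh.rootGraph δh.rootTok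

/-- A complete extension of a pattern `(p, v)` that leaf-instantiates `Δ'`. -/
def CompleteExtension (Ru' Ps' : CSpace V A L) (Δ' : DTree V A L)
    (p : PreGraph V A L) (v : V) (g' : PreGraph V A L) (t' : V) : Prop :=
  IsConstructionIn Ru' g' t' ∧
  ∃ fv fa, IsEmbedding Ru'.le g' p fv fa ∧ fv t' = v ∧
    ∀ Δh, IsDecompositionOf Ps' Δh p v → DecompositionMatches Ru'.le Δh Δ' →
      ∀ pi δh, subtreeAt pi Δh = some δh → δh.kids = [] →
        ∀ x ∈ δh.rootGraph.Tk, x ∈ g'.Tk ∧ fv x = x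

/-- `(g, t)` and `(p, v)` are valid at the leaves of `Δ` and `Δ'`. -/
def ValidAtLeaves (Ru Ru' Ip Ps' : CSpace V A L) (Δ Δ' : DTree V A L)
    (Lm : List ℕ → List ℕ → Option (TConstraint V A L))
    (g : PreGraph V A L) (t : V) (p : PreGraph V A L) (v : V) : Prop :=
  ∀ pi pi' δ δ', subtreeAt pi Δ = some δ → subtreeAt pi' Δ' = some δ' →
    δ.kids = [] → δ'.kids = [] →
    ValidAt Ru Ru' Ip Ps' Δ Δ' Lm g t p v pi pi'


section AuxStatement13

variable {V A L : Type*}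

private lemma mem_of_getElem?' {α : Type*} {l : List α} {i : ℕ} {a : α}
    (h : l[i]? = some a) : a ∈ l := by
  obtain ⟨hlt, he⟩ := List.getElem?_eq_some_iff.mp h
  exact he ▸ List.getElem_mem hlt

private lemma mem_getElem?' {α : Type*} {l : List α} {a : α} (h : a ∈ l) :
    ∃ i : ℕ, l[i]? = some a := by
  obtain ⟨i, hi, he⟩ := List.getElem_of_mem h
  exact ⟨i, by simp [List.getElem?_eq_getElem, hi, he]⟩

/-- In-arrow sequences are unique. -/
lemma inArrowSeq_unique {p : PreGraph V A L} (hia : IsFunctionOn p.ia p.Arr)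
    {u : V} {l1 l2 : List A} (h1 : InArrowSeq p u l1) (h2 : InArrowSeq p u l2) :
    l1 = l2 := by
  obtain ⟨hn1, hm1, hi1⟩ := h1
  obtain ⟨hn2, hm2, hi2⟩ := h2
  have sub : ∀ (l l' : List A),
      (∀ a : A, a ∈ l ↔ a ∈ p.Arr ∧ ∃ w, (a, (w, u)) ∈ p.inc) →
      (∀ (i : ℕ) (a : A), l[i]? = some a → (a, i + 1) ∈ p.ia) →
      (∀ a : A, a ∈ l' ↔ a ∈ p.Arr ∧ ∃ w, (a, (w, u)) ∈ p.inc) →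
      (∀ (i : ℕ) (a : A), l'[i]? = some a → (a, i + 1) ∈ p.ia) →
      ∀ (i : ℕ) (a : A), l[i]? = some a → l'[i]? = some a := by
    intro l l' hm hi hm' hi' i a hla
    have hmem : a ∈ l := mem_of_getElem?' hla
    have hmem' : a ∈ l' := (hm' a).mpr ((hm a).mp hmem)
    obtain ⟨j, hj⟩ := mem_getElem?' hmem'
    have haArr : a ∈ p.Arr := ((hm a).mp hmem).1
    obtain ⟨n, _, hun⟩ := hia.2 a haArr
    have h1n := hun _ (hi i a hla)
    have h2n := hun _ (hi' j a hj)
    have : i = j := by omega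
    exact this ▸ hj
  apply List.ext_getElem?
  intro i
  rcases h : l1[i]? with _ | a
  · rcases h' : l2[i]? with _ | b
    · rfl
    · exact absurd (sub l2 l1 hm2 hi2 hm1 hi1 i b h') (by simp [h])
  · exact (sub l1 l2 hm1 hi1 hm2 hi2 i a h).symm

/-- TES sequences are unique for trails with a token source in a uni-structured graph. -/
lemma TES_unique {p : PreGraph V A L} (hpg : IsGraph p) (hup : UniStructured p)
    {tr : Trail V A} {S : List (Trail V A)} (h : TES p tr S) :
    tr.src ∈ p.Tk → ∀ S', TES p tr S' → S = S' := by
  induction h with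
  | nonext tr hne =>
    intro hsrc S' h'
    cases h' with
    | nonext _ _ => rfl
    | ext _ a u ars Ss hext _ _ _ _ => exact absurd ⟨a, hext⟩ hne
  | ext tr a u ars Ss hext hinc hars hlen hrec ih =>
    intro hsrc S' h'
    cases h' with
    | nonext _ hne => exact absurd ⟨a, hext⟩ hne
    | ext _ a' u' ars' Ss' hext' hinc' hars' hlen' hrec' =>
      have haa : a = a' := hup tr.src hsrc a hext.1 a' hext'.1 ⟨_, hinc⟩ ⟨_, hinc'⟩
      subst haa
      obtain ⟨q, hq, huq⟩ := hpg.2.1.2 a hext.1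
      have huu : u = u' := by
        have h1 := huq _ hinc
        have h2 := huq _ hinc'
        have := h1.trans h2.symm
        exact congrArg Prod.fst this
      subst huu
      have hars_eq : ars = ars' := inArrowSeq_unique hpg.2.2.2.1 hars hars'
      subst hars_eq
      have huCf : u ∈ p.Cf := by
        rcases hpg.2.2.1 a u tr.src hinc with ⟨hu, hs⟩ | ⟨hu, _⟩
        · exact absurd hs (Set.disjoint_left.mp hpg.1 hsrc)
        · exact hu
      have hSs : Ss = Ss' := by
        apply List.ext_getElem?
        intro i
        by_cases hi : i < ars.length
        · obtain ⟨ai, hai⟩ : ∃ ai, ars[i]? = some ai :=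
            ⟨ars[i], List.getElem?_eq_getElem hi⟩
          obtain ⟨Si, hSi⟩ : ∃ Si, Ss[i]? = some Si :=
            ⟨Ss[i]'(by omega), List.getElem?_eq_getElem (by omega)⟩
          obtain ⟨Si', hSi'⟩ : ∃ Si', Ss'[i]? = some Si' :=
            ⟨Ss'[i]'(by omega), List.getElem?_eq_getElem (by omega)⟩
          obtain ⟨haiArr, si, hsi⟩ := (hars.2.1 ai).mp (mem_of_getElem?' hai)
          have hsiTk : si ∈ p.Tk := by
            rcases hpg.2.2.1 ai si u hsi with ⟨hx, _⟩ | ⟨hx, hu⟩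
            · exact hx
            · exact absurd huCf (Set.disjoint_left.mp hpg.1 hu)
          have := ih i ai si Si hai hSi hsi hsiTk Si' (hrec' i ai si Si' hai hSi' hsi)
          rw [hSi, hSi', this]
        · rw [List.getElem?_eq_none (by omega), List.getElem?_eq_none (by omega)]
      rw [hSs]

/-- Embeddings map TES sequences to TES sequences. -/
lemma TES_map {g p : PreGraph V A L} {le : Set (L × L)}
    (hgg : IsGraph g) (hpg : IsGraph p)
    {fv : V → V} {fa : A → A} (hemb : IsEmbedding le g p fv fa)
    {tr : Trail V A} {S : List (Trail V A)} (h : TES g tr S) :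
    tr.src ∈ g.Tk → (∀ b ∈ tr.arrows, b ∈ g.Arr) →
    TES p (Trail.map fv fa tr) (S.map (Trail.map fv fa)) := by
  obtain ⟨hTk, hCf, hvinj, hTksur, hCfsur, hArr, hainj, hasur, hinc, hia, hcl, htl⟩ := hemb
  have pull : ∀ a0 ∈ g.Arr, ∀ (w y0 : V), y0 ∈ g.Tk ∪ g.Cf →
      (fa a0, (w, fv y0)) ∈ p.inc → ∃ x, (a0, (x, y0)) ∈ g.inc ∧ fv x = w := by
    intro a0 ha0 w y0 hy0 hw
    obtain ⟨⟨x, y⟩, hxy, _⟩ := hgg.2.1.2 a0 ha0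
    have hfwd : (fa a0, (fv x, fv y)) ∈ p.inc := hinc _ _ _ hxy
    obtain ⟨q, hq, huq⟩ := hpg.2.1.2 (fa a0) (hArr a0 ha0)
    have heq : ((fv x : V), (fv y : V)) = ((w : V), (fv y0 : V)) :=
      (huq _ hfwd).trans (huq _ hw).symm
    have hy : y ∈ g.Tk ∪ g.Cf := by
      rcases hgg.2.2.1 a0 x y hxy with ⟨_, h2⟩ | ⟨_, h2⟩
      · exact Or.inr h2
      · exact Or.inl h2
    have hyy : y = y0 := hvinj y hy y0 hy0 (congrArg Prod.snd heq)
    exact ⟨x, hyy ▸ hxy, congrArg Prod.fst heq⟩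
  induction h with
  | nonext tr hne =>
    intro hsrc _
    have hne' : NonExtendable p (Trail.map fv fa tr) := by
      rintro ⟨b, hbArr, hbnot, s, hbinc⟩
      obtain ⟨a0, ha0, rfl⟩ := hasur b hbArr
      obtain ⟨x, hx, _⟩ := pull a0 ha0 s tr.src (Or.inl hsrc) hbinc
      exact hne ⟨a0, ha0, fun hmem => hbnot (List.mem_map_of_mem (f := fa) hmem), x, hx⟩
    simpa [Trail.map] using TES.nonext (g := p) (Trail.map fv fa tr) hne'
  | ext tr a u ars Ss hext hinc_a hars hlen hrec ih =>
    intro hsrc harr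
    have huCf : u ∈ g.Cf := by
      rcases hgg.2.2.1 a u tr.src hinc_a with ⟨_, hs⟩ | ⟨hu, _⟩
      · exact absurd hs (Set.disjoint_left.mp hgg.1 hsrc)
      · exact hu
    have arsSub : ∀ b ∈ ars, b ∈ g.Arr := fun b hb => ((hars.2.1 b).mp hb).1
    have hext' : ExtendableBy p (Trail.map fv fa tr) (fa a) := by
      refine ⟨hArr a hext.1, ?_, fv u, hinc _ _ _ hinc_a⟩
      intro hmem
      obtain ⟨b, hb, hbe⟩ := List.mem_map.mp hmem
      exact hext.2.1 (hainj b (harr b hb) a hext.1 hbe ▸ hb)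
    have hars' : InArrowSeq p (fv u) (ars.map fa) := by
      refine ⟨hars.1.map_on (fun a1 h1 a2 h2 he =>
        hainj a1 (arsSub a1 h1) a2 (arsSub a2 h2) he), ?_, ?_⟩
      · intro b
        constructor
        · intro hb
          obtain ⟨a0, ha0mem, rfl⟩ := List.mem_map.mp hb
          obtain ⟨ha0Arr, w, hw⟩ := (hars.2.1 a0).mp ha0mem
          exact ⟨hArr a0 ha0Arr, fv w, hinc _ _ _ hw⟩
        · rintro ⟨hbArr, w, hw⟩
          obtain ⟨a0, ha0, rfl⟩ := hasur b hbArr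
          obtain ⟨x, hx, _⟩ := pull a0 ha0 w u (Or.inr huCf) hw
          exact List.mem_map_of_mem (f := fa) ((hars.2.1 a0).mpr ⟨ha0, x, hx⟩)
      · intro i b hb
        rw [List.getElem?_map] at hb
        obtain ⟨a0, ha0, rfl⟩ := Option.map_eq_some_iff.mp hb
        exact hia _ _ (hars.2.2 i a0 ha0)
    have hrec' : ∀ (i : ℕ) (bi : A) (si' : V) (Si' : List (Trail V A)),
        (ars.map fa)[i]? = some bi →
        (Ss.map (List.map (Trail.map fv fa)))[i]? = some Si' →
        (bi, (si', fv u)) ∈ p.inc →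
        TES p ⟨bi :: fa a :: tr.arrows.map fa, si', fv tr.tgt⟩ Si' := by
      intro i bi si' Si' hbi hSi' hinci'
      rw [List.getElem?_map] at hbi hSi'
      obtain ⟨ai, hai, rfl⟩ := Option.map_eq_some_iff.mp hbi
      obtain ⟨Si, hSi, rfl⟩ := Option.map_eq_some_iff.mp hSi'
      have haiArr : ai ∈ g.Arr := arsSub ai (mem_of_getElem?' hai)
      obtain ⟨x, hx, hfx⟩ := pull ai haiArr si' u (Or.inr huCf) hinci'
      have hxTk : x ∈ g.Tk := by
        rcases hgg.2.2.1 ai x u hx with ⟨h1, _⟩ | ⟨h1, h2⟩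
        · exact h1
        · exact absurd huCf (Set.disjoint_left.mp hgg.1 h2)
      have harr' : ∀ b ∈ ai :: a :: tr.arrows, b ∈ g.Arr := by
        intro b hb
        rcases List.mem_cons.mp hb with rfl | hb
        · exact haiArr
        · rcases List.mem_cons.mp hb with rfl | hb
          · exact hext.1
          · exact harr b hb
      have := ih i ai x Si hai hSi hx hxTk harr'
      simpa [Trail.map, hfx] using this
    have hmain := TES.ext (g := p) (Trail.map fv fa tr) (fa a) (fv u) (ars.map fa)
      (Ss.map (List.map (Trail.map fv fa))) hext' (hinc _ _ _ hinc_a) hars'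
      (by simp [hlen]) hrec'
    have heq : (List.flatten (List.zipWith
        (fun (ai : A) (Si : List (Trail V A)) =>
          Si.map (fun e => (⟨e.arrows ++ [ai, a], e.src, tr.src⟩ : Trail V A)))
        ars Ss)).map (Trail.map fv fa)
      = List.flatten (List.zipWith
        (fun (bi : A) (Ti : List (Trail V A)) =>
          Ti.map (fun e => (⟨e.arrows ++ [bi, fa a], e.src,
            (Trail.map fv fa tr).src⟩ : Trail V A)))
        (ars.map fa) (Ss.map (List.map (Trail.map fv fa)))) := by
      simp only [List.map_flatten, List.map_zipWith, List.zipWith_map, List.map_map,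
        Function.comp_def, Trail.map, List.map_append, List.map_cons, List.map_nil]
    rw [show (Trail.map fv fa tr) = ⟨tr.arrows.map fa, fv tr.src, fv tr.tgt⟩ from rfl] at hmain heq ⊢
    exact heq ▸ hmain

end AuxStatement13

/-- an embedding of a construction into a pattern maps its complete trail
sequence onto that of the pattern, maps its foundation token-sequence onto that of the
pattern, and the foundation type-sequence of the construction specialises that of the
pattern. -/
theorem embedding_preserves_cts_and_foundations {V A L : Type*}
    (Cs Ps : CSpace V A L) (hCs : IsCSpace Cs) (hPs : IsPatternSpace Cs Ps)
    (g : PreGraph V A L) (t : V) (hg : IsConstruction Cs g t)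
    (p : PreGraph V A L) (v : V) (hp : IsConstruction Ps p v)
    (fv : V → V) (fa : A → A)
    (hemb : IsEmbedding Cs.le g p fv fa) (hft : fv t = v) :
    (∀ S : List (Trail V A), TES g (Trail.nil t) S →
        TES p (Trail.nil v) (S.map (Trail.map fv fa))) ∧
    (∀ S S' : List (Trail V A), TES g (Trail.nil t) S → TES p (Trail.nil v) S' →
        srcSeq S' = (srcSeq S).map fv) ∧
    (∀ (S S' : List (Trail V A)) (τs σs : List L),
        TES g (Trail.nil t) S → TES p (Trail.nil v) S' →
        List.Forall₂ (fun x τ => (x, τ) ∈ g.tl) (srcSeq S) τs →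
        List.Forall₂ (fun x σ => (x, σ) ∈ p.tl) (srcSeq S') σs →
        List.Forall₂ (fun τ σ => (τ, σ) ∈ Cs.le) τs σs) := by
  have hgg : IsGraph g := hg.2.1.1
  have hpg : IsGraph p := hp.2.1.1
  have hpuni : UniStructured p := hp.2.2.2.2.2.1
  have htTk : t ∈ g.Tk := hg.2.2.2.2.2.2.1
  have hvTk : v ∈ p.Tk := hp.2.2.2.2.2.2.1
  have part1 : ∀ S : List (Trail V A), TES g (Trail.nil t) S →
      TES p (Trail.nil v) (S.map (Trail.map fv fa)) := by
    intro S hS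
    have := TES_map hgg hpg hemb hS htTk (by intro b hb; simp [Trail.nil] at hb)
    simpa (config := { decide := false }) [Trail.nil, Trail.map, hft] using this
  have part2 : ∀ S S' : List (Trail V A), TES g (Trail.nil t) S →
      TES p (Trail.nil v) S' → srcSeq S' = (srcSeq S).map fv := by
    intro S S' hS hS'
    have h1 := part1 S hS
    have heq : S.map (Trail.map fv fa) = S' :=
      TES_unique hpg hpuni h1 hvTk S' hS'
    rw [← heq]
    simp [srcSeq, Trail.map, Function.comp]
  refine ⟨part1, part2, ?_⟩
  obtain ⟨_, _, _, _, _, _, _, _, _, _, _, htl⟩ := hemb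
  have key : ∀ (xs : List V) (τs : List L),
      List.Forall₂ (fun x τ => (x, τ) ∈ g.tl) xs τs →
      ∀ σs : List L, List.Forall₂ (fun x σ => (x, σ) ∈ p.tl) (xs.map fv) σs →
      List.Forall₂ (fun τ σ => (τ, σ) ∈ Cs.le) τs σs := by
    intro xs τs h1
    induction h1 with
    | nil =>
      intro σs h2
      cases h2
      exact .nil
    | cons hx h1' ihx =>
      intro σs h2
      rw [List.map_cons] at h2
      cases h2 with
      | cons hfx h2' =>
        obtain ⟨σ0, hσ0, hle⟩ := htl _ _ hx
        have hfvTk := (hpg.2.2.2.2.1).1 _ hσ0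
        obtain ⟨σu, _, huσ⟩ := (hpg.2.2.2.2.1).2 _ hfvTk
        have hσeq : σ0 = _ := (huσ _ hσ0).trans (huσ _ hfx).symm
        exact .cons (hσeq ▸ hle) (ihx _ h2')
  intro S S' τs σs hS hS' hτ hσ
  have hsrc := part2 S S' hS hS'
  rw [hsrc] at hσ
  exact key _ _ hτ _ hσ

end RST
end

section
/- Let (g, t) be a construction in a construction space. Then there exists a decomposition D of (g, t) that is a decoupling of (g, t), i.e. a decomposition in which every vertex is labelled by a construction that is trivial or basic. -/
namespace RST

variable {V A L : Type*}

section Decoupling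

variable {V A L : Type*}

theorem list_choice {α β : Type*} (R : α → β → Prop) :
    ∀ l : List α, (∀ x ∈ l, ∃ y, R x y) →
      ∃ l' : List β, l'.length = l.length ∧
        ∀ (i : ℕ) (x : α) (y : β), l[i]? = some x → l'[i]? = some y → R x y := by
  intro l
  induction l with
  | nil => intro _; exact ⟨[], rfl, by intro i x y hx; simp at hx⟩
  | cons a l ih =>
    intro h
    obtain ⟨y, hy⟩ := h a (by simp)
    obtain ⟨l', hlen, hl'⟩ := ih (fun x hx => h x (by simp [hx]))
    refine ⟨y :: l', by simp [hlen], ?_⟩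
    intro i x z hx hz
    cases i with
    | zero => simp at hx hz; subst hx; subst hz; exact hy
    | succ i => simp only [List.getElem?_cons_succ] at hx hz; exact hl' i x z hx hz

theorem mem_flatten_zipWith {α β γ : Type*} (f : α → β → List γ) :
    ∀ (l1 : List α) (l2 : List β) (x : γ),
      x ∈ (List.zipWith f l1 l2).flatten ↔
        ∃ (i : ℕ) (a : α) (b : β), l1[i]? = some a ∧ l2[i]? = some b ∧ x ∈ f a b := by
  intro l1
  induction l1 with
  | nil => intro l2 x; simp
  | cons a l1 ih =>
    intro l2 x
    cases l2 with
    | nil => simp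
    | cons b l2 =>
      simp only [List.zipWith_cons_cons, List.flatten_cons, List.mem_append, ih]
      constructor
      · rintro (hx | ⟨i, a', b', h1, h2, h3⟩)
        · exact ⟨0, a, b, by simp, by simp, hx⟩
        · exact ⟨i + 1, a', b', by simpa using h1, by simpa using h2, h3⟩
      · rintro ⟨i, a', b', h1, h2, h3⟩
        cases i with
        | zero => simp at h1 h2; subst h1; subst h2; exact Or.inl h3
        | succ i =>
          simp only [List.getElem?_cons_succ] at h1 h2
          exact Or.inr ⟨i, a', b', h1, h2, h3⟩

/-! chain lemmas -/

theorem chain_arrows_mem {g : PreGraph V A L} :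
    ∀ {l : List A} {s t : V}, ChainIn g l s t → ∀ b ∈ l, b ∈ g.Arr := by
  intro l
  induction l with
  | nil => intro s t _ b hb; simp at hb
  | cons a l ih =>
    rintro s t ⟨ha, m, hm, hc⟩ b hb
    rcases List.mem_cons.mp hb with h | h
    · subst h; exact ha
    · exact ih hc b h

theorem chain_append {g : PreGraph V A L} :
    ∀ {l1 l2 : List A} {s m t : V}, ChainIn g l1 s m → ChainIn g l2 m t →
      ChainIn g (l1 ++ l2) s t := by
  intro l1
  induction l1 with
  | nil => intro l2 s m t h1 h2; cases h1; exact h2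
  | cons a l1 ih =>
    rintro l2 s m t ⟨ha, m', hm', hc⟩ h2
    exact ⟨ha, m', hm', ih hc h2⟩

theorem chain_split {g : PreGraph V A L} :
    ∀ {l1 l2 : List A} {s t : V}, ChainIn g (l1 ++ l2) s t →
      ∃ m, ChainIn g l1 s m ∧ ChainIn g l2 m t := by
  intro l1
  induction l1 with
  | nil => intro l2 s t h; exact ⟨s, rfl, h⟩
  | cons a l1 ih =>
    rintro l2 s t ⟨ha, m', hm', hc⟩
    obtain ⟨m, h1, h2⟩ := ih hc
    exact ⟨m, ⟨ha, m', hm', h1⟩, h2⟩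

theorem chain_last {g : PreGraph V A L} :
    ∀ {l : List A} {s t : V}, l ≠ [] → ChainIn g l s t →
      ∃ b ∈ l, ∃ w, (b, (w, t)) ∈ g.inc := by
  intro l
  induction l with
  | nil => intro s t h; exact absurd rfl h
  | cons a l ih =>
    rintro s t _ ⟨ha, m, hm, hc⟩
    cases l with
    | nil => cases hc; exact ⟨a, by simp, s, hm⟩
    | cons b l' =>
      obtain ⟨b', hb', w, hw⟩ := ih (by simp) hc
      exact ⟨b', by simp [hb'], w, hw⟩

theorem chain_restrict {g : PreGraph V A L} {Vs : Set V} {As : Set A} :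
    ∀ {l : List A} {s t : V}, ChainIn g l s t → (∀ b ∈ l, b ∈ As) →
      ChainIn (g.restrict Vs As) l s t := by
  intro l
  induction l with
  | nil => intro s t h _; exact h
  | cons a l ih =>
    rintro s t ⟨ha, m, hm, hc⟩ hAs
    exact ⟨⟨ha, hAs a (by simp)⟩, m, ⟨hm, hAs a (by simp)⟩, ih hc (fun b hb => hAs b (by simp [hb]))⟩

theorem inc_unique {g : PreGraph V A L} (hf : IsFunctionOn g.inc g.Arr)
    {a : A} {p q : V × V} (hp : (a, p) ∈ g.inc) (hq : (a, q) ∈ g.inc) : p = q := by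
  obtain ⟨y, hy, huniq⟩ := hf.2 a (hf.1 _ hp)
  rw [huniq p hp, huniq q hq]

theorem chain_next {g : PreGraph V A L} (hf : IsFunctionOn g.inc g.Arr) :
    ∀ {l : List A} {s t : V}, ChainIn g l s t → ∀ b ∈ l, ∀ v w, (b, (v, w)) ∈ g.inc →
      w = t ∨ ∃ b' ∈ l, ∃ m, (b', (w, m)) ∈ g.inc := by
  intro l
  induction l with
  | nil => intro s t _ b hb; simp at hb
  | cons a l ih =>
    rintro s t ⟨ha, m, hm, hc⟩ b hb v w hvw
    rcases List.mem_cons.mp hb with h | h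
    · subst h
      have : (v, w) = (s, m) := inc_unique hf hvw hm
      cases this
      cases l with
      | nil => exact Or.inl hc
      | cons c l' =>
        obtain ⟨hcArr, m2, hm2, _⟩ := hc
        exact Or.inr ⟨c, by simp, m2, hm2⟩
    · rcases ih hc b h v w hvw with h' | ⟨b', hb', m', hm'⟩
      · exact Or.inl h'
      · exact Or.inr ⟨b', by simp [hb'], m', hm'⟩


/-! graph basics -/

theorem pg_ext {g h : PreGraph V A L} (h1 : g.Tk = h.Tk) (h2 : g.Cf = h.Cf)
    (h3 : g.Arr = h.Arr) (h4 : g.inc = h.inc) (h5 : g.ia = h.ia) (h6 : g.tl = h.tl)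
    (h7 : g.cl = h.cl) : g = h := by
  cases g; cases h; simp_all

theorem restrict_subgraph (g : PreGraph V A L) (Vs : Set V) (As : Set A) :
    (g.restrict Vs As).Subgraph g := by
  refine ⟨Set.inter_subset_left, Set.inter_subset_left, Set.inter_subset_left, ?_, ?_, ?_, ?_⟩ <;>
    intro q hq <;> exact hq.1

theorem subgraph_trans {a b c : PreGraph V A L} (h1 : a.Subgraph b) (h2 : b.Subgraph c) :
    a.Subgraph c :=
  ⟨h1.1.trans h2.1, h1.2.1.trans h2.2.1, h1.2.2.1.trans h2.2.2.1,
   h1.2.2.2.1.trans h2.2.2.2.1, h1.2.2.2.2.1.trans h2.2.2.2.2.1,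
   h1.2.2.2.2.2.1.trans h2.2.2.2.2.2.1, h1.2.2.2.2.2.2.trans h2.2.2.2.2.2.2⟩

theorem inc_mem_arr {g : PreGraph V A L} (hg : IsGraph g) {a : A} {p : V × V}
    (h : (a, p) ∈ g.inc) : a ∈ g.Arr := hg.2.1.1 _ h

theorem isGraph_restrict {g : PreGraph V A L} (hg : IsGraph g) {Vs : Set V} {As : Set A}
    (hend : ∀ b ∈ As, ∀ v w, (b, (v, w)) ∈ g.inc → v ∈ Vs ∧ w ∈ Vs) :
    IsGraph (g.restrict Vs As) := by
  obtain ⟨hdisj, hinc, hbip, hia, htl, hcl⟩ := hg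
  refine ⟨hdisj.mono Set.inter_subset_left Set.inter_subset_left, ?_, ?_, ?_, ?_, ?_⟩
  · constructor
    · rintro p ⟨hp, hpAs⟩; exact ⟨hinc.1 p hp, hpAs⟩
    · rintro x ⟨hx, hxAs⟩
      obtain ⟨y, hy, huniq⟩ := hinc.2 x hx
      exact ⟨y, ⟨hy, hxAs⟩, fun y' hy' => huniq y' hy'.1⟩
  · rintro a v w ⟨h, hAs⟩
    obtain ⟨hv, hw⟩ := hend a hAs v w h
    rcases hbip a v w h with ⟨h1, h2⟩ | ⟨h1, h2⟩
    · exact Or.inl ⟨⟨h1, hv⟩, ⟨h2, hw⟩⟩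
    · exact Or.inr ⟨⟨h1, hv⟩, ⟨h2, hw⟩⟩
  · constructor
    · rintro p ⟨hp, hpAs⟩; exact ⟨hia.1 p hp, hpAs⟩
    · rintro x ⟨hx, hxAs⟩
      obtain ⟨y, hy, huniq⟩ := hia.2 x hx
      exact ⟨y, ⟨hy, hxAs⟩, fun y' hy' => huniq y' hy'.1⟩
  · constructor
    · rintro p ⟨hp, hpVs⟩; exact ⟨htl.1 p hp, hpVs⟩
    · rintro x ⟨hx, hxVs⟩
      obtain ⟨y, hy, huniq⟩ := htl.2 x hx
      exact ⟨y, ⟨hy, hxVs⟩, fun y' hy' => huniq y' hy'.1⟩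
  · constructor
    · rintro p ⟨hp, hpVs⟩; exact ⟨hcl.1 p hp, hpVs⟩
    · rintro x ⟨hx, hxVs⟩
      obtain ⟨y, hy, huniq⟩ := hcl.2 x hx
      exact ⟨y, ⟨hy, hxVs⟩, fun y' hy' => huniq y' hy'.1⟩

theorem incidentArrows_endpoints {g : PreGraph V A L} (hg : IsGraph g) (u : V) :
    ∀ b ∈ g.incidentArrows u, ∀ v w, (b, (v, w)) ∈ g.inc →
      v ∈ g.adjTo u ∧ w ∈ g.adjTo u := by
  rintro b ⟨hbArr, v0, hv0⟩ v w hvw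
  rcases hv0 with h | h
  · have := inc_unique hg.2.1 hvw h
    rw [Prod.ext_iff] at this; obtain ⟨rfl, rfl⟩ := (by simpa using this : v = v0 ∧ w = u)
    exact ⟨Or.inr ⟨b, hbArr, Or.inl h⟩, Or.inl rfl⟩
  · have := inc_unique hg.2.1 hvw h
    rw [Prod.ext_iff] at this; obtain ⟨rfl, rfl⟩ := (by simpa using this : v = u ∧ w = v0)
    exact ⟨Or.inl rfl, Or.inr ⟨b, hbArr, Or.inr h⟩⟩

theorem isGraph_nh {g : PreGraph V A L} (hg : IsGraph g) (u : V) : IsGraph (g.Nh u) :=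
  isGraph_restrict hg (incidentArrows_endpoints hg u)

/-! structure graph facts -/

theorem out_arrow_unique {Ty le C sig} {g : PreGraph V A L}
    (hsg : IsStructureGraph Ty le C sig g) {u : V} (hu : u ∈ g.Cf)
    {a b : A} {w x : V} (ha : a ∈ g.Arr) (hb : b ∈ g.Arr)
    (hwa : (a, (u, w)) ∈ g.inc) (hxb : (b, (u, x)) ∈ g.inc) : a = b := by
  obtain ⟨c, ins, out, _, _, _, hconf⟩ := hsg.2.2 u hu
  obtain ⟨_, _, _, _, ⟨a0, ha0, huniq⟩, _⟩ := hconf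
  have haI : a ∈ g.incidentArrows u := ⟨ha, w, Or.inr hwa⟩
  have hbI : b ∈ g.incidentArrows u := ⟨hb, x, Or.inr hxb⟩
  have h1 : a = a0 := huniq a ⟨⟨ha, haI⟩, w, hwa, haI⟩
  have h2 : b = a0 := huniq b ⟨⟨hb, hbI⟩, x, hxb, hbI⟩
  rw [h1, h2]

theorem inArrowSeq_of_nh {g : PreGraph V A L} {u : V} {ars : List A}
    (h : InArrowSeq (g.Nh u) u ars) : InArrowSeq g u ars := by
  obtain ⟨hnd, hmem, hia⟩ := h
  refine ⟨hnd, ?_, fun i a hia' => (hia i a hia').1⟩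
  intro a
  rw [hmem]
  constructor
  · rintro ⟨⟨ha, _⟩, w, hw, _⟩; exact ⟨ha, w, hw⟩
  · rintro ⟨ha, w, hw⟩
    have hI : a ∈ g.incidentArrows u := ⟨ha, w, Or.inl hw⟩
    exact ⟨⟨ha, hI⟩, w, hw, hI⟩

theorem inArrowSeq_unique_s14 {g : PreGraph V A L} (hg : IsGraph g) {u : V} {ars1 ars2 : List A}
    (h1 : InArrowSeq g u ars1) (h2 : InArrowSeq g u ars2) : ars1 = ars2 := by
  obtain ⟨hnd1, hmem1, hia1⟩ := h1
  obtain ⟨hnd2, hmem2, hia2⟩ := h2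
  have key : ∀ (i : ℕ) (a : A), ars1[i]? = some a → ars2[i]? = some a := by
    intro i a hi
    have haMem : a ∈ ars1 := by
      have := List.getElem?_eq_some_iff.mp hi
      obtain ⟨hlt, he⟩ := this
      exact he ▸ List.getElem_mem _
    have haMem2 : a ∈ ars2 := (hmem2 a).mpr ((hmem1 a).mp haMem)
    obtain ⟨j, hj, he⟩ := List.getElem_of_mem haMem2
    have hj2 : ars2[j]? = some a := by rw [List.getElem?_eq_getElem hj, he]
    have e1 : (a, i + 1) ∈ g.ia := hia1 i a hi
    have e2 : (a, j + 1) ∈ g.ia := hia2 j a hj2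
    have haArr : a ∈ g.Arr := ((hmem1 a).mp haMem).1
    obtain ⟨y, hy, huniq⟩ := hg.2.2.2.1.2 a haArr
    have : i + 1 = j + 1 := by rw [huniq _ e1, huniq _ e2]
    have : i = j := by omega
    rw [this]; exact hj2
  have key2 : ∀ (i : ℕ) (a : A), ars2[i]? = some a → ars1[i]? = some a := by
    intro i a hi
    have haMem : a ∈ ars2 := by
      obtain ⟨hlt, he⟩ := List.getElem?_eq_some_iff.mp hi
      exact he ▸ List.getElem_mem _
    have haMem1 : a ∈ ars1 := (hmem1 a).mpr ((hmem2 a).mp haMem)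
    obtain ⟨j, hj, he⟩ := List.getElem_of_mem haMem1
    have hj1 : ars1[j]? = some a := by rw [List.getElem?_eq_getElem hj, he]
    have e1 : (a, i + 1) ∈ g.ia := hia2 i a hi
    have e2 : (a, j + 1) ∈ g.ia := hia1 j a hj1
    have haArr : a ∈ g.Arr := ((hmem2 a).mp haMem).1
    obtain ⟨y, hy, huniq⟩ := hg.2.2.2.1.2 a haArr
    have : i + 1 = j + 1 := by rw [huniq _ e1, huniq _ e2]
    have : i = j := by omega
    rw [this]; exact hj1
  apply List.ext_getElem?
  intro i
  cases h : ars1[i]? with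
  | none =>
    cases h2 : ars2[i]? with
    | none => rfl
    | some a => rw [key2 i a h2] at h; exact h.symm ▸ rfl
  | some a => exact (key i a h).symm


/-! bipartite endpoints -/

theorem src_cf {g : PreGraph V A L} (hg : IsGraph g) {a : A} {u x : V}
    (h : (a, (u, x)) ∈ g.inc) (hx : x ∈ g.Tk) : u ∈ g.Cf := by
  rcases hg.2.2.1 a u x h with ⟨h1, h2⟩ | ⟨h1, h2⟩
  · exact absurd h2 (Set.disjoint_left.mp hg.1 hx)
  · exact h1

theorem tgt_cf {g : PreGraph V A L} (hg : IsGraph g) {a : A} {u x : V}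
    (h : (a, (x, u)) ∈ g.inc) (hx : x ∈ g.Tk) : u ∈ g.Cf := by
  rcases hg.2.2.1 a x u h with ⟨h1, h2⟩ | ⟨h1, h2⟩
  · exact h2
  · exact absurd h1 (Set.disjoint_left.mp hg.1 hx)

theorem src_tk {g : PreGraph V A L} (hg : IsGraph g) {a : A} {s u : V}
    (h : (a, (s, u)) ∈ g.inc) (hu : u ∈ g.Cf) : s ∈ g.Tk := by
  rcases hg.2.2.1 a s u h with ⟨h1, h2⟩ | ⟨h1, h2⟩
  · exact h1
  · exact absurd h2 (Set.disjoint_right.mp hg.1 hu)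

theorem tgt_tk {g : PreGraph V A L} (hg : IsGraph g) {a : A} {s u : V}
    (h : (a, (u, s)) ∈ g.inc) (hu : u ∈ g.Cf) : s ∈ g.Tk := by
  rcases hg.2.2.1 a u s h with ⟨h1, h2⟩ | ⟨h1, h2⟩
  · exact absurd h1 (Set.disjoint_right.mp hg.1 hu)
  · exact h2

/-! TES existence -/

theorem tes_exists_aux {Ty : Set L} {le : Set (L × L)} {C : Set L}
    {sig : Set (L × (List L × L))} {g : PreGraph V A L}
    (hsg : IsStructureGraph Ty le C sig g) (hfin : g.Arr.Finite) :
    ∀ (n : ℕ) (tr : Trail V A), (g.Arr \ {b | b ∈ tr.arrows}).ncard ≤ n →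
      tr.src ∈ g.Tk → ∃ S, TES g tr S := by
  intro n
  induction n using Nat.strong_induction_on with
  | _ n ih =>
    intro tr hn hsrc
    by_cases hext : Extendable g tr
    · obtain ⟨a, haArr, haNot, u, hu⟩ := hext
      have huCf : u ∈ g.Cf := src_cf hsg.1 hu hsrc
      obtain ⟨c, ins, out, _, _, _, hconf⟩ := hsg.2.2 u huCf
      obtain ⟨_, _, _, _, _, _, ars, harsNh, _⟩ := hconf
      have hars : InArrowSeq g u ars := inArrowSeq_of_nh harsNh
      have hmeas : ∀ l : List A, tr.arrows ⊆ l → a ∈ l →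
          (g.Arr \ {b | b ∈ l}).ncard < n := by
        intro l hsub hal
        have hss : (g.Arr \ {b | b ∈ l}) ⊂ (g.Arr \ {b | b ∈ tr.arrows}) := by
          constructor
          · rintro x ⟨hx1, hx2⟩
            exact ⟨hx1, fun hmem => hx2 (hsub hmem)⟩
          · intro hcon
            exact (hcon ⟨haArr, haNot⟩).2 hal
        calc (g.Arr \ {b | b ∈ l}).ncard
            < (g.Arr \ {b | b ∈ tr.arrows}).ncard :=
              Set.ncard_lt_ncard hss (hfin.subset Set.diff_subset)
          _ ≤ n := hn
      have hchoice : ∀ ai ∈ ars, ∃ Si : List (Trail V A), ∀ si, (ai, (si, u)) ∈ g.inc →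
          TES g ⟨ai :: a :: tr.arrows, si, tr.tgt⟩ Si := by
        intro ai hai
        obtain ⟨haiArr, si0, hsi0⟩ := (hars.2.1 ai).mp hai
        have hsi0Tk : si0 ∈ g.Tk := src_tk hsg.1 hsi0 huCf
        have hm : (g.Arr \ {b | b ∈ ai :: a :: tr.arrows}).ncard < n :=
          hmeas _ (fun x hx => by simp [hx]) (by simp)
        obtain ⟨Si, hSi⟩ := ih _ hm ⟨ai :: a :: tr.arrows, si0, tr.tgt⟩ le_rfl hsi0Tk
        refine ⟨Si, fun si hsi => ?_⟩
        have : (si, u) = (si0, u) := inc_unique hsg.1.2.1 hsi hsi0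
        have : si = si0 := by simpa using this
        rw [this]; exact hSi
      obtain ⟨Ss, hSlen, hSs⟩ := list_choice _ ars hchoice
      refine ⟨_, TES.ext tr a u ars Ss ⟨haArr, haNot, u, hu⟩ hu hars hSlen ?_⟩
      intro i ai si Si hi hSi hsi
      have hai : ai ∈ ars := by
        obtain ⟨hlt, he⟩ := List.getElem?_eq_some_iff.mp hi
        exact he ▸ List.getElem_mem _
      exact hSs i ai Si hi hSi si hsi
    · exact ⟨_, TES.nonext tr hext⟩

theorem tes_exists {Ty : Set L} {le : Set (L × L)} {C : Set L}
    {sig : Set (L × (List L × L))} {g : PreGraph V A L}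
    (hsg : IsStructureGraph Ty le C sig g) (hfin : g.Arr.Finite)
    (tr : Trail V A) (hsrc : tr.src ∈ g.Tk) : ∃ S, TES g tr S :=
  tes_exists_aux hsg hfin _ tr le_rfl hsrc


/-! the TES invariant -/

theorem tes_inv {Ty : Set L} {le : Set (L × L)} {C : Set L}
    {sig : Set (L × (List L × L))} {g : PreGraph V A L}
    (hsg : IsStructureGraph Ty le C sig g)
    (hins : ∀ c ins out, (c, (ins, out)) ∈ sig → ins ≠ [])
    {tr : Trail V A} {S : List (Trail V A)} (h : TES g tr S) :
    tr.arrows.Nodup → ChainIn g tr.arrows tr.src tr.tgt → tr.src ∈ g.Tk → tr.tgt ∈ g.Tk →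
    ((∀ e ∈ S, e.tgt = tr.src ∧ e.src ∈ g.Tk ∧ (e.arrows ++ tr.arrows).Nodup ∧
        ChainIn g e.arrows e.src e.tgt) ∧
      S ≠ [] ∧
      (∀ u' ∈ g.Cf,
        (∃ b ∈ trailArrowSet S, ∃ v, (b, (v, u')) ∈ g.inc ∨ (b, (u', v)) ∈ g.inc) →
        ∀ b ∈ g.Arr, (∃ v, (b, (v, u')) ∈ g.inc ∨ (b, (u', v)) ∈ g.inc) →
          b ∈ trailArrowSet S)) := by
  induction h with
  | nonext tr hne =>
    intro hnd hch hsrc htgt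
    refine ⟨?_, by simp, ?_⟩
    · intro e he
      simp only [List.mem_singleton] at he
      subst he
      exact ⟨rfl, hsrc, by simpa using hnd, rfl⟩
    · rintro u' hu' ⟨b, hb, _⟩
      exfalso
      obtain ⟨e, he, hbe⟩ := hb
      simp only [List.mem_singleton] at he
      subst he
      simp at hbe
  | ext tr a u ars Ss hext hinc hars hlen hrec ih =>
    intro hnd hch hsrc htgt
    obtain ⟨haArr, haNot, _⟩ := hext
    have huCf : u ∈ g.Cf := src_cf hsg.1 hinc hsrc
    -- source of each in-arrow
    have hsiTk : ∀ {ai si : A → Prop}, True := fun {_ _} => trivial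
    have hainot : ∀ (ai : A) (si : V), (ai, (si, u)) ∈ g.inc → ai ∈ g.Arr →
        ai ∉ a :: tr.arrows := by
      intro ai si hsi haiArr hmem
      rcases List.mem_cons.mp hmem with rfl | hmem
      · have h1 : si = u := (Prod.ext_iff.mp (inc_unique hsg.1.2.1 hsi hinc)).1
        have h2 : u = tr.src := (Prod.ext_iff.mp (inc_unique hsg.1.2.1 hsi hinc)).2
        exact Set.disjoint_left.mp hsg.1.1 (h2 ▸ hsrc) huCf
      · rcases chain_next hsg.1.2.1 hch ai hmem si u hsi with h' | ⟨b', hb', m, hm⟩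
        · exact Set.disjoint_left.mp hsg.1.1 (h' ▸ htgt) huCf
        · have : b' = a := out_arrow_unique hsg huCf (chain_arrows_mem hch b' hb') haArr hm hinc
          exact haNot (this ▸ hb')
    -- extended-trail hypotheses
    have hextTrail : ∀ (ai : A) (si : V), (ai, (si, u)) ∈ g.inc → ai ∈ g.Arr →
        (ai :: a :: tr.arrows).Nodup ∧
        ChainIn g (ai :: a :: tr.arrows) si tr.tgt ∧ si ∈ g.Tk := by
      intro ai si hsi haiArr
      refine ⟨List.nodup_cons.mpr ⟨hainot ai si hsi haiArr, List.nodup_cons.mpr ⟨haNot, hnd⟩⟩,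
        ⟨haiArr, u, hsi, haArr, tr.src, hinc, hch⟩, src_tk hsg.1 hsi huCf⟩
    -- the IH in usable form
    have IH : ∀ (i : ℕ) (ai : A) (si : V) (Si : List (Trail V A)),
        ars[i]? = some ai → Ss[i]? = some Si → (ai, (si, u)) ∈ g.inc →
        ((∀ e ∈ Si, e.tgt = si ∧ e.src ∈ g.Tk ∧
            (e.arrows ++ (ai :: a :: tr.arrows)).Nodup ∧
            ChainIn g e.arrows e.src e.tgt) ∧
          Si ≠ [] ∧
          (∀ u' ∈ g.Cf,
            (∃ b ∈ trailArrowSet Si, ∃ v, (b, (v, u')) ∈ g.inc ∨ (b, (u', v)) ∈ g.inc) →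
            ∀ b ∈ g.Arr, (∃ v, (b, (v, u')) ∈ g.inc ∨ (b, (u', v)) ∈ g.inc) →
              b ∈ trailArrowSet Si)) := by
      intro i ai si Si hi hSi hsi
      have haiArr : ai ∈ g.Arr := ((hars.2.1 ai).mp (by
        obtain ⟨hlt, he⟩ := List.getElem?_eq_some_iff.mp hi
        exact he ▸ List.getElem_mem _)).1
      obtain ⟨h1, h2, h3⟩ := hextTrail ai si hsi haiArr
      exact ih i ai si Si hi hSi hsi h1 h2 h3 htgt
    -- membership decomposition for S
    have memS : ∀ e' : Trail V A,
        e' ∈ (List.zipWith (fun (ai : A) (Si : List (Trail V A)) =>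
          Si.map (fun e => (⟨e.arrows ++ [ai, a], e.src, tr.src⟩ : Trail V A))) ars Ss).flatten
        ↔ ∃ (i : ℕ) (ai : A) (Si : List (Trail V A)) (e : Trail V A),
            ars[i]? = some ai ∧ Ss[i]? = some Si ∧ e ∈ Si ∧
            e' = ⟨e.arrows ++ [ai, a], e.src, tr.src⟩ := by
      intro e'
      rw [mem_flatten_zipWith]
      constructor
      · rintro ⟨i, ai, Si, h1, h2, h3⟩
        obtain ⟨e, he, heq⟩ := List.mem_map.mp h3
        exact ⟨i, ai, Si, e, h1, h2, he, heq.symm⟩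
      · rintro ⟨i, ai, Si, e, h1, h2, he, heq⟩
        exact ⟨i, ai, Si, h1, h2, List.mem_map.mpr ⟨e, he, heq.symm⟩⟩
    -- source witnesses
    have hsrcOf : ∀ (i : ℕ) (ai : A), ars[i]? = some ai →
        ai ∈ g.Arr ∧ ∃ si, (ai, (si, u)) ∈ g.inc := by
      intro i ai hi
      exact (hars.2.1 ai).mp (by
        obtain ⟨hlt, he⟩ := List.getElem?_eq_some_iff.mp hi
        exact he ▸ List.getElem_mem _)
    have hSsome : ∀ (i : ℕ) (ai : A), ars[i]? = some ai → ∃ Si, Ss[i]? = some Si := by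
      intro i ai hi
      obtain ⟨hlt, _⟩ := List.getElem?_eq_some_iff.mp hi
      exact ⟨Ss[i]'(by rw [hlen]; exact hlt), List.getElem?_eq_getElem _⟩
    -- (a)
    have partA : ∀ e' ∈ (List.zipWith (fun (ai : A) (Si : List (Trail V A)) =>
          Si.map (fun e => (⟨e.arrows ++ [ai, a], e.src, tr.src⟩ : Trail V A))) ars Ss).flatten,
        e'.tgt = tr.src ∧ e'.src ∈ g.Tk ∧ (e'.arrows ++ tr.arrows).Nodup ∧
          ChainIn g e'.arrows e'.src e'.tgt := by
      intro e' he'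
      obtain ⟨i, ai, Si, e, h1, h2, he, heq⟩ := (memS e').mp he'
      obtain ⟨haiArr, si, hsi⟩ := hsrcOf i ai h1
      obtain ⟨ihA, _, _⟩ := IH i ai si Si h1 h2 hsi
      obtain ⟨hetgt, hesrc, hend, hech⟩ := ihA e he
      subst heq
      refine ⟨rfl, hesrc, ?_, ?_⟩
      · have := hend
        simpa [List.append_assoc] using this
      · refine chain_append hech ?_
        rw [hetgt]
        exact ⟨haiArr, u, hsi, haArr, tr.src, hinc, rfl⟩
    refine ⟨partA, ?_, ?_⟩
    -- (b) nonempty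
    · have harsne : ars ≠ [] := by
        obtain ⟨c, ins, out, _, _, hsig, hconf⟩ := hsg.2.2 u huCf
        obtain ⟨_, _, _, _, _, _, ars0, hars0, hlen0, _⟩ := hconf
        have : ars = ars0 := inArrowSeq_unique_s14 hsg.1 hars (inArrowSeq_of_nh hars0)
        have h0 : ins ≠ [] := hins c ins out hsig
        intro hcon
        apply h0
        have : ars0.length = 0 := by rw [← this, hcon]; rfl
        rw [this] at hlen0
        exact List.eq_nil_of_length_eq_zero hlen0.symm
      obtain ⟨a0, ha0⟩ := List.exists_mem_of_ne_nil ars harsne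
      obtain ⟨i, hlt, hget⟩ := List.getElem_of_mem ha0
      have hi : ars[i]? = some a0 := by rw [List.getElem?_eq_getElem hlt, hget]
      obtain ⟨Si, hSi⟩ := hSsome i a0 hi
      obtain ⟨_, si, hsi⟩ := hsrcOf i a0 hi
      obtain ⟨_, hne, _⟩ := IH i a0 si Si hi hSi hsi
      obtain ⟨e, he⟩ := List.exists_mem_of_ne_nil Si hne
      exact List.ne_nil_of_mem ((memS _).mpr ⟨i, a0, Si, e, hi, hSi, he, rfl⟩)
    -- (c) completeness
    · rintro u' hu' ⟨b0, hb0, v0, hv0⟩ b hbArr ⟨v, hv⟩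
      by_cases huu : u' = u
      · subst huu
        rcases hv with hv | hv
        · -- b is an in-arrow of u'
          have hbars : b ∈ ars := (hars.2.1 b).mpr ⟨hbArr, v, hv⟩
          obtain ⟨i, hlt, hget⟩ := List.getElem_of_mem hbars
          have hi : ars[i]? = some b := by rw [List.getElem?_eq_getElem hlt, hget]
          obtain ⟨Si, hSi⟩ := hSsome i b hi
          obtain ⟨_, si, hsi⟩ := hsrcOf i b hi
          obtain ⟨_, hne, _⟩ := IH i b si Si hi hSi hsi
          obtain ⟨e, he⟩ := List.exists_mem_of_ne_nil Si hne
          exact ⟨_, (memS _).mpr ⟨i, b, Si, e, hi, hSi, he, rfl⟩, by simp⟩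
        · -- b is the out-arrow of u', i.e. b = a
          have hba : b = a := out_arrow_unique hsg hu' hbArr haArr hv hinc
          subst hba
          obtain ⟨e0, he0, _⟩ := hb0
          exact ⟨e0, he0, by
            obtain ⟨i, ai, Si, e, h1, h2, he, heq⟩ := (memS _).mp he0
            subst heq; simp⟩
      · -- u' ≠ u : descend into some Si
        obtain ⟨e0, he0, hb0e0⟩ := hb0
        obtain ⟨i, ai, Si, e, h1, h2, he, heq⟩ := (memS _).mp he0
        obtain ⟨haiArr, si, hsi⟩ := hsrcOf i ai h1
        subst heq
        simp only [Trail.mk.injEq] at hb0e0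
        have hb0cases : b0 ∈ e.arrows ∨ b0 = ai ∨ b0 = a := by
          rcases List.mem_append.mp hb0e0 with h' | h'
          · exact Or.inl h'
          · rcases List.mem_cons.mp h' with h'' | h''
            · exact Or.inr (Or.inl h'')
            · exact Or.inr (Or.inr (by simpa using h''))
        have hb0Si : b0 ∈ e.arrows := by
          rcases hb0cases with h' | h' | h'
          · exact h'
          · exfalso; subst h'
            rcases hv0 with hv0 | hv0
            · have := inc_unique hsg.1.2.1 hv0 hsi
              have : u' = u := (Prod.ext_iff.mp this).2
              exact huu this
            · have := inc_unique hsg.1.2.1 hv0 hsi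
              have h1' : u' = si := (Prod.ext_iff.mp this).1
              exact Set.disjoint_left.mp hsg.1.1 (h1' ▸ src_tk hsg.1 hsi huCf) hu'
          · exfalso; subst h'
            rcases hv0 with hv0 | hv0
            · have := inc_unique hsg.1.2.1 hv0 hinc
              have : u' = tr.src := (Prod.ext_iff.mp this).2
              exact Set.disjoint_left.mp hsg.1.1 (this ▸ hsrc) hu'
            · have := inc_unique hsg.1.2.1 hv0 hinc
              have : u' = u := (Prod.ext_iff.mp this).1
              exact huu this
        obtain ⟨_, _, ihC⟩ := IH i ai si Si h1 h2 hsi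
        have hbSi : b ∈ trailArrowSet Si :=
          ihC u' hu' ⟨b0, ⟨e, he, hb0Si⟩, v0, hv0⟩ b hbArr ⟨v, hv⟩
        obtain ⟨e2, he2, hbe2⟩ := hbSi
        exact ⟨_, (memS _).mpr ⟨i, ai, Si, e2, h1, h2, he2, rfl⟩, by simp [hbe2]⟩


/-! induced constructions are constructions -/

theorem trGraph_construction {Cs : CSpace V A L}
    {g : PreGraph V A L} {t : V} (hc : IsConstruction Cs g t)
    (hins : ∀ c ins out, (c, (ins, out)) ∈ Cs.sig → ins ≠ [])
    {tr : Trail V A} {S : List (Trail V A)} (h : TES g tr S)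
    (hnd : tr.arrows.Nodup) (hch : ChainIn g tr.arrows tr.src tr.tgt)
    (hsrc : tr.src ∈ g.Tk) (htgt : tr.tgt ∈ g.Tk) :
    IsConstruction Cs (trGraph g S) tr.src ∧
    (∀ b ∈ trailArrowSet S, b ∉ tr.arrows) ∧
    (∀ u' ∈ g.Cf, u' ∈ trailVertexSet g S →
      ∀ b ∈ g.Arr, (∃ v, (b, (v, u')) ∈ g.inc ∨ (b, (u', v)) ∈ g.inc) →
        b ∈ trailArrowSet S) := by
  obtain ⟨hsub, hsg, hfinTk, hfinCf, hfinArr, huni, htTk, htrails⟩ := hc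
  obtain ⟨invA, invNe, invC⟩ := tes_inv hsg hins h hnd hch hsrc htgt
  set As := trailArrowSet S with hAs
  set Vs := trailVertexSet g S with hVs
  -- basic facts
  have F1 : ∀ b ∈ As, b ∈ g.Arr := by
    rintro b ⟨e, he, hbe⟩
    exact chain_arrows_mem (invA e he).2.2.2 b hbe
  have F2 : ∀ b ∈ As, ∀ v w, (b, (v, w)) ∈ g.inc → v ∈ Vs ∧ w ∈ Vs := by
    intro b hb v w hvw
    exact ⟨Or.inl ⟨b, hb, w, Or.inl hvw⟩, Or.inl ⟨b, hb, v, Or.inr hvw⟩⟩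
  have part2 : ∀ b ∈ As, b ∉ tr.arrows := by
    rintro b ⟨e, he, hbe⟩
    exact fun hbt => (List.disjoint_of_nodup_append (invA e he).2.2.1) hbe hbt
  have part3 : ∀ u' ∈ g.Cf, u' ∈ Vs →
      ∀ b ∈ g.Arr, (∃ v, (b, (v, u')) ∈ g.inc ∨ (b, (u', v)) ∈ g.inc) →
        b ∈ As := by
    rintro u' hu' (⟨b0, hb0, w0, hw0⟩ | ⟨e, he, hearr, hesrc⟩) b hbArr hv
    · refine invC u' hu' ⟨b0, hb0, w0, ?_⟩ b hbArr hv
      rcases hw0 with h1 | h1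
      · exact Or.inr h1
      · exact Or.inl h1
    · exfalso
      have := (invA e he).2.1
      rw [hesrc] at this
      exact Set.disjoint_left.mp hsg.1.1 this hu'
  -- the construct is a vertex
  have hsrcVs : tr.src ∈ Vs := by
    obtain ⟨e, he⟩ := List.exists_mem_of_ne_nil S invNe
    obtain ⟨hetgt, hesrc, _, hech⟩ := invA e he
    cases harr : e.arrows with
    | nil =>
      right
      refine ⟨e, he, harr, ?_⟩
      have : e.src = e.tgt := by rw [harr] at hech; exact hech
      rw [this, hetgt]
    | cons b l =>
      obtain ⟨b', hb', w, hw⟩ := chain_last (by rw [harr]; simp) hech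
      rw [hetgt] at hw
      exact Or.inl ⟨b', ⟨e, he, hb'⟩, w, Or.inr hw⟩
  -- Nh transfer
  have nhEq : ∀ u' ∈ g.Cf, u' ∈ Vs → (trGraph g S).Nh u' = g.Nh u' := by
    intro u' hu' hu'Vs
    have hfull : ∀ b ∈ g.incidentArrows u', b ∈ As := by
      rintro b ⟨hbArr, v, hbv⟩
      exact part3 u' hu' hu'Vs b hbArr ⟨v, hbv⟩
    have hIA : (trGraph g S).incidentArrows u' = g.incidentArrows u' := by
      ext b
      constructor
      · rintro ⟨⟨hbArr, _⟩, v, (⟨h1, _⟩ | ⟨h1, _⟩)⟩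
        · exact ⟨hbArr, v, Or.inl h1⟩
        · exact ⟨hbArr, v, Or.inr h1⟩
      · rintro hb
        have hbAs : b ∈ As := hfull b hb
        obtain ⟨hbArr, v, hbv⟩ := hb
        rcases hbv with h1 | h1
        · exact ⟨⟨hbArr, hbAs⟩, v, Or.inl ⟨h1, hbAs⟩⟩
        · exact ⟨⟨hbArr, hbAs⟩, v, Or.inr ⟨h1, hbAs⟩⟩
    have hAdj : (trGraph g S).adjTo u' = g.adjTo u' := by
      ext v
      constructor
      · rintro (h1 | ⟨b, ⟨hbArr, _⟩, (⟨h1, _⟩ | ⟨h1, _⟩)⟩)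
        · exact Or.inl h1
        · exact Or.inr ⟨b, hbArr, Or.inl h1⟩
        · exact Or.inr ⟨b, hbArr, Or.inr h1⟩
      · rintro (h1 | ⟨b, hbArr, hbv⟩)
        · exact Or.inl h1
        · have hbAs : b ∈ As := by
            rcases hbv with h1 | h1
            · exact hfull b ⟨hbArr, v, Or.inl h1⟩
            · exact hfull b ⟨hbArr, v, Or.inr h1⟩
          rcases hbv with h1 | h1
          · exact Or.inr ⟨b, ⟨hbArr, hbAs⟩, Or.inl ⟨h1, hbAs⟩⟩
          · exact Or.inr ⟨b, ⟨hbArr, hbAs⟩, Or.inr ⟨h1, hbAs⟩⟩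
    have hadjVs : ∀ v, v ∈ g.adjTo u' → (v ∈ g.Tk ∪ g.Cf) → v ∈ Vs := by
      rintro v (h1 | ⟨b, hbArr, hbv⟩) _
      · rw [h1]; exact hu'Vs
      · have hbAs : b ∈ As := by
          rcases hbv with h1 | h1
          · exact hfull b ⟨hbArr, v, Or.inl h1⟩
          · exact hfull b ⟨hbArr, v, Or.inr h1⟩
        rcases hbv with h1 | h1
        · exact (F2 b hbAs v u' h1).1
        · exact (F2 b hbAs u' v h1).2
    show (trGraph g S).Nh u' = g.Nh u'
    rw [PreGraph.Nh, PreGraph.Nh, hIA, hAdj]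
    apply pg_ext
    · show g.Tk ∩ Vs ∩ g.adjTo u' = g.Tk ∩ g.adjTo u'
      ext v
      constructor
      · rintro ⟨⟨h1, _⟩, h2⟩; exact ⟨h1, h2⟩
      · rintro ⟨h1, h2⟩; exact ⟨⟨h1, hadjVs v h2 (Or.inl h1)⟩, h2⟩
    · show g.Cf ∩ Vs ∩ g.adjTo u' = g.Cf ∩ g.adjTo u'
      ext v
      constructor
      · rintro ⟨⟨h1, _⟩, h2⟩; exact ⟨h1, h2⟩
      · rintro ⟨h1, h2⟩; exact ⟨⟨h1, hadjVs v h2 (Or.inr h1)⟩, h2⟩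
    · show g.Arr ∩ As ∩ g.incidentArrows u' = g.Arr ∩ g.incidentArrows u'
      ext b
      constructor
      · rintro ⟨⟨h1, _⟩, h2⟩; exact ⟨h1, h2⟩
      · rintro ⟨h1, h2⟩; exact ⟨⟨h1, hfull b h2⟩, h2⟩
    · ext q
      constructor
      · rintro ⟨⟨h1, _⟩, h2⟩; exact ⟨h1, h2⟩
      · rintro ⟨h1, h2⟩; exact ⟨⟨h1, hfull q.1 h2⟩, h2⟩
    · ext q
      constructor
      · rintro ⟨⟨h1, _⟩, h2⟩; exact ⟨h1, h2⟩
      · rintro ⟨h1, h2⟩; exact ⟨⟨h1, hfull q.1 h2⟩, h2⟩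
    · ext q
      constructor
      · rintro ⟨⟨h1, _⟩, h2⟩; exact ⟨h1, h2⟩
      · rintro ⟨h1, h2⟩
        have hq : q.1 ∈ g.Tk := hsg.1.2.2.2.2.1.1 q h1
        exact ⟨⟨h1, hadjVs q.1 h2 (Or.inl hq)⟩, h2⟩
    · ext q
      constructor
      · rintro ⟨⟨h1, _⟩, h2⟩; exact ⟨h1, h2⟩
      · rintro ⟨h1, h2⟩
        have hq : q.1 ∈ g.Cf := hsg.1.2.2.2.2.2.1 q h1
        exact ⟨⟨h1, hadjVs q.1 h2 (Or.inr hq)⟩, h2⟩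
  -- structure graph
  have hsg' : IsStructureGraph Cs.Ty Cs.le Cs.C Cs.sig (trGraph g S) := by
    refine ⟨isGraph_restrict hsg.1 (fun b hb v w hvw => F2 b hb v w hvw), ?_, ?_⟩
    · rintro x τ ⟨hx, _⟩; exact hsg.2.1 x τ hx
    · rintro u' ⟨hu', hu'Vs⟩
      obtain ⟨c, ins, out, hcl, hcC, hsig, hconf⟩ := hsg.2.2 u' hu'
      exact ⟨c, ins, out, ⟨hcl, hu'Vs⟩, hcC, hsig, (nhEq u' hu' hu'Vs) ▸ hconf⟩
  refine ⟨⟨subgraph_trans (restrict_subgraph g Vs As) hsub, hsg', ?_, ?_, ?_, ?_, ?_, ?_⟩,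
    part2, part3⟩
  · exact hfinTk.subset Set.inter_subset_left
  · exact hfinCf.subset Set.inter_subset_left
  · exact hfinArr.subset Set.inter_subset_left
  · rintro x ⟨hx, _⟩ a ⟨ha, _⟩ b ⟨hb, _⟩ ⟨wa, hwa, _⟩ ⟨wb, hwb, _⟩
    exact huni x hx a ha b hb ⟨wa, hwa⟩ ⟨wb, hwb⟩
  · exact ⟨hsrc, hsrcVs⟩
  · -- trails to the construct
    rintro v hv
    have hvVs : v ∈ Vs := by
      rcases hv with ⟨_, h⟩ | ⟨_, h⟩ <;> exact h
    have hsrcTk' : tr.src ∈ (trGraph g S).Tk := ⟨hsrc, hsrcVs⟩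
    rcases hvVs with ⟨b, hbAs, w0, hw0⟩ | ⟨e, he, hearr, hesrc⟩
    · -- v is an endpoint of an arrow b in a trail e
      obtain ⟨e, he, hbe⟩ := hbAs
      obtain ⟨hetgt, hesrc, hendnd, hech⟩ := invA e he
      have hend : e.arrows.Nodup := List.Nodup.of_append_left hendnd
      obtain ⟨l1, l2, hl⟩ := List.append_of_mem hbe
      rw [hl] at hech hend
      obtain ⟨m, ch1, ch2⟩ := chain_split hech
      obtain ⟨hbArr, m2, hbpair, ch3⟩ := ch2
      have hl2sub : ∀ x ∈ b :: l2, x ∈ As := by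
        intro x hx
        exact ⟨e, he, by rw [hl]; exact List.mem_append_right _ hx⟩
      have hnd2 : (b :: l2).Nodup := List.Nodup.of_append_right hend
      rcases hw0 with hpair | hpair
      · -- (b, (v, w0)) : v = m
        have : (v, w0) = (m, m2) := inc_unique hsg.1.2.1 hpair hbpair
        have hvm : v = m := (Prod.ext_iff.mp this).1
        refine ⟨⟨b :: l2, v, tr.src⟩, ⟨hnd2, ?_, hv, Or.inl hsrcTk'⟩, rfl, rfl⟩
        have : ChainIn g (b :: l2) v e.tgt := by
          rw [hvm]; exact ⟨hbArr, m2, hbpair, ch3⟩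
        rw [hetgt] at this
        exact chain_restrict this hl2sub
      · -- (b, (w0, v)) : v = m2
        have : (w0, v) = (m, m2) := inc_unique hsg.1.2.1 hpair hbpair
        have hvm : v = m2 := (Prod.ext_iff.mp this).2
        refine ⟨⟨l2, v, tr.src⟩, ⟨hnd2.of_cons, ?_, hv, Or.inl hsrcTk'⟩, rfl, rfl⟩
        have : ChainIn g l2 v e.tgt := by rw [hvm]; exact ch3
        rw [hetgt] at this
        exact chain_restrict this (fun x hx => hl2sub x (List.mem_cons_of_mem _ hx))
    · -- v is the source of an empty trail: v = tr.src
      obtain ⟨hetgt, _, _, hech⟩ := invA e he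
      have : e.src = e.tgt := by rw [hearr] at hech; exact hech
      have hveq : v = tr.src := by rw [← hesrc, this, hetgt]
      subst hveq
      exact ⟨⟨[], tr.src, tr.src⟩, ⟨List.nodup_nil, rfl, hv, hv⟩, rfl, rfl⟩


/-! the basic generator at the construct's configurator -/

theorem nh_inc_sub (g : PreGraph V A L) (u : V) : (g.Nh u).inc ⊆ g.inc :=
  fun q hq => hq.1

theorem generator_split {Cs : CSpace V A L}
    {g : PreGraph V A L} {t : V} (hc : IsConstruction Cs g t)
    {u : V} (hu : u ∈ g.Cf) {a : A} (haArr : a ∈ g.Arr) (hat : (a, (u, t)) ∈ g.inc) :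
    IsConstruction Cs (g.Nh u) t ∧ (g.Nh u).Cf = {u} ∧
    ∃ trs : List (Trail V A), TES (g.Nh u) (Trail.nil t) trs ∧
      ∀ tri ∈ trs, ∃ (ai : A) (si : V), ai ∈ g.Arr ∧ (ai, (si, u)) ∈ g.inc ∧
        si ∈ g.Tk ∧ ai ≠ a ∧ tri = ⟨[ai, a], si, t⟩ := by
  obtain ⟨hsub, hsg, hfinTk, hfinCf, hfinArr, huni, htTk, htrails⟩ := hc
  set N := g.Nh u with hN
  have haI : a ∈ g.incidentArrows u := ⟨haArr, t, Or.inr hat⟩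
  have haN : a ∈ N.Arr := ⟨haArr, haI⟩
  have hatN : (a, (u, t)) ∈ N.inc := ⟨hat, haI⟩
  have htN : t ∈ N.Tk := ⟨htTk, Or.inr ⟨a, haArr, Or.inr hat⟩⟩
  have huAdj : u ∈ g.adjTo u := Or.inl rfl
  have hCf : N.Cf = {u} := by
    ext v
    constructor
    · rintro ⟨hvCf, (h1 | ⟨b, hbArr, hbv⟩)⟩
      · exact h1
      · exfalso
        rcases hbv with h1 | h1
        · rcases hsg.1.2.2.1 b v u h1 with ⟨h2, _⟩ | ⟨_, h2⟩
          · exact Set.disjoint_left.mp hsg.1.1 h2 hvCf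
          · exact Set.disjoint_left.mp hsg.1.1 h2 hu
        · rcases hsg.1.2.2.1 b u v h1 with ⟨h2, _⟩ | ⟨_, h2⟩
          · exact Set.disjoint_left.mp hsg.1.1 h2 hu
          · exact Set.disjoint_left.mp hsg.1.1 h2 hvCf
    · rintro rfl
      exact ⟨hu, huAdj⟩
  -- Nh idempotence
  have hIA : N.incidentArrows u = g.incidentArrows u := by
    ext b
    constructor
    · rintro ⟨⟨hbArr, _⟩, v, (⟨h1, _⟩ | ⟨h1, _⟩)⟩
      · exact ⟨hbArr, v, Or.inl h1⟩
      · exact ⟨hbArr, v, Or.inr h1⟩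
    · rintro hb
      obtain ⟨hbArr, v, hbv⟩ := hb
      have hbI : b ∈ g.incidentArrows u := ⟨hbArr, v, hbv⟩
      rcases hbv with h1 | h1
      · exact ⟨⟨hbArr, hbI⟩, v, Or.inl ⟨h1, hbI⟩⟩
      · exact ⟨⟨hbArr, hbI⟩, v, Or.inr ⟨h1, hbI⟩⟩
  have hAdj : N.adjTo u = g.adjTo u := by
    ext v
    constructor
    · rintro (h1 | ⟨b, ⟨hbArr, _⟩, (⟨h1, _⟩ | ⟨h1, _⟩)⟩)
      · exact Or.inl h1
      · exact Or.inr ⟨b, hbArr, Or.inl h1⟩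
      · exact Or.inr ⟨b, hbArr, Or.inr h1⟩
    · rintro (h1 | ⟨b, hbArr, hbv⟩)
      · exact Or.inl h1
      · have hbI : b ∈ g.incidentArrows u := by
          rcases hbv with h1 | h1
          · exact ⟨hbArr, v, Or.inl h1⟩
          · exact ⟨hbArr, v, Or.inr h1⟩
        rcases hbv with h1 | h1
        · exact Or.inr ⟨b, ⟨hbArr, hbI⟩, Or.inl ⟨h1, hbI⟩⟩
        · exact Or.inr ⟨b, ⟨hbArr, hbI⟩, Or.inr ⟨h1, hbI⟩⟩
  have hNhEq : N.Nh u = g.Nh u := by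
    show N.Nh u = N
    rw [PreGraph.Nh, hIA, hAdj]
    apply pg_ext
    · show g.Tk ∩ g.adjTo u ∩ g.adjTo u = g.Tk ∩ g.adjTo u
      rw [Set.inter_assoc, Set.inter_self]
    · show g.Cf ∩ g.adjTo u ∩ g.adjTo u = g.Cf ∩ g.adjTo u
      rw [Set.inter_assoc, Set.inter_self]
    · show g.Arr ∩ g.incidentArrows u ∩ g.incidentArrows u = g.Arr ∩ g.incidentArrows u
      rw [Set.inter_assoc, Set.inter_self]
    · ext q; constructor
      · rintro ⟨⟨h1, h2⟩, _⟩; exact ⟨h1, h2⟩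
      · rintro ⟨h1, h2⟩; exact ⟨⟨h1, h2⟩, h2⟩
    · ext q; constructor
      · rintro ⟨⟨h1, h2⟩, _⟩; exact ⟨h1, h2⟩
      · rintro ⟨h1, h2⟩; exact ⟨⟨h1, h2⟩, h2⟩
    · ext q; constructor
      · rintro ⟨⟨h1, h2⟩, _⟩; exact ⟨h1, h2⟩
      · rintro ⟨h1, h2⟩; exact ⟨⟨h1, h2⟩, h2⟩
    · ext q; constructor
      · rintro ⟨⟨h1, h2⟩, _⟩; exact ⟨h1, h2⟩
      · rintro ⟨h1, h2⟩; exact ⟨⟨h1, h2⟩, h2⟩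
  -- structure graph
  obtain ⟨c, ins, out, hcl, hcC, hsig, hconf⟩ := hsg.2.2 u hu
  have hsgN : IsStructureGraph Cs.Ty Cs.le Cs.C Cs.sig N := by
    refine ⟨isGraph_nh hsg.1 u, ?_, ?_⟩
    · rintro x τ ⟨hx, _⟩; exact hsg.2.1 x τ hx
    · intro u' hu'
      have : u' = u := by rw [hCf] at hu'; exact hu'
      subst this
      exact ⟨c, ins, out, ⟨hcl, huAdj⟩, hcC, hsig, hNhEq ▸ hconf⟩
  -- in-arrow nonduplication with a
  have hinNe : ∀ (ai : A) (si : V), (ai, (si, u)) ∈ g.inc → ai ≠ a := by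
    intro ai si hsi he
    subst he
    have := inc_unique hsg.1.2.1 hsi hat
    have h1 : si = u := (Prod.ext_iff.mp this).1
    have hsiTk : si ∈ g.Tk := src_tk hsg.1 hsi hu
    exact Set.disjoint_left.mp hsg.1.1 (h1 ▸ hsiTk) hu
  -- construction
  have hcons : IsConstruction Cs N t := by
    refine ⟨subgraph_trans (restrict_subgraph _ _ _) hsub, hsgN,
      hfinTk.subset Set.inter_subset_left, hfinCf.subset Set.inter_subset_left,
      hfinArr.subset Set.inter_subset_left, ?_, htN, ?_⟩
    · rintro x ⟨hx, _⟩ b1 ⟨hb1, _⟩ b2 ⟨hb2, _⟩ ⟨w1, hw1, _⟩ ⟨w2, hw2, _⟩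
      exact huni x hx b1 hb1 b2 hb2 ⟨w1, hw1⟩ ⟨w2, hw2⟩
    · rintro v hv
      rcases hv with ⟨hvTk, hvAdj⟩ | hvCf
      · -- token of N
        have hvN : v ∈ N.Tk := ⟨hvTk, hvAdj⟩
        rcases hvAdj with h1 | ⟨b, hbArr, hbv⟩
        · exact absurd hu (h1 ▸ fun h => Set.disjoint_left.mp hsg.1.1 hvTk h)
        · have hbI : b ∈ g.incidentArrows u := by
            rcases hbv with h1 | h1
            · exact ⟨hbArr, v, Or.inl h1⟩
            · exact ⟨hbArr, v, Or.inr h1⟩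
          rcases hbv with h1 | h1
          · -- in-token : trail [b, a]
            have hba : b ≠ a := hinNe b v h1
            refine ⟨⟨[b, a], v, t⟩, ⟨by simp [hba], ?_, Or.inl hvN, Or.inl htN⟩, rfl, rfl⟩
            exact ⟨⟨hbArr, hbI⟩, u, ⟨h1, hbI⟩, haN, t, hatN, rfl⟩
          · -- out-token : v = t
            have hba : b = a := out_arrow_unique hsg hu hbArr haArr h1 hat
            subst hba
            have : (u, v) = (u, t) := inc_unique hsg.1.2.1 h1 hat
            have hvt : v = t := (Prod.ext_iff.mp this).2
            subst hvt
            exact ⟨⟨[], v, v⟩, ⟨List.nodup_nil, rfl, Or.inl hvN, Or.inl hvN⟩,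
              rfl, rfl⟩
      · -- the configurator u
        have : v = u := by rw [hCf] at hvCf; exact hvCf
        subst this
        exact ⟨⟨[a], v, t⟩, ⟨by simp, ⟨haN, t, hatN, rfl⟩, Or.inr hvCf, Or.inl htN⟩, rfl, rfl⟩
  -- the TES of the empty trail in N
  obtain ⟨_, _, _, _, _, _, ars, harsN, hlenars, _⟩ := hconf
  have harsN' : InArrowSeq N u ars := by rw [← hNhEq] at harsN; exact inArrowSeq_of_nh harsN
  have harsG : InArrowSeq g u ars := inArrowSeq_of_nh harsN
  have hchoice : ∀ ai ∈ ars, ∃ Si : List (Trail V A),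
      (∃ si, (ai, (si, u)) ∈ N.inc ∧ Si = [Trail.nil si]) ∧
      ∀ si, (ai, (si, u)) ∈ N.inc → TES N ⟨[ai, a], si, t⟩ Si := by
    intro ai hai
    obtain ⟨haiN, si0, hsi0⟩ := (harsN'.2.1 ai).mp hai
    have hsi0g : (ai, (si0, u)) ∈ g.inc := hsi0.1
    have hsi0Tk : si0 ∈ g.Tk := src_tk hsg.1 hsi0g hu
    have hne : NonExtendable N ⟨[ai, a], si0, t⟩ := by
      rintro ⟨b, hbN, hbmem, s, hbs⟩
      obtain ⟨hbArr, hbI⟩ := hbN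
      have hbsg : (b, (s, si0)) ∈ g.inc := hbs.1
      obtain ⟨_, x, hbx⟩ := hbI
      rcases hbx with h1 | h1
      · have := inc_unique hsg.1.2.1 hbsg h1
        have h2 : si0 = u := (Prod.ext_iff.mp this).2
        exact Set.disjoint_left.mp hsg.1.1 (h2 ▸ hsi0Tk) hu
      · have hba : b = a := out_arrow_unique hsg hu hbArr haArr h1 hat
        exact hbmem (by simp [hba])
    refine ⟨[Trail.nil si0], ⟨si0, hsi0, rfl⟩, ?_⟩
    intro si hsi
    have : (si, u) = (si0, u) := inc_unique hsg.1.2.1 hsi.1 hsi0.1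
    have hsieq : si = si0 := (Prod.ext_iff.mp this).1
    subst hsieq
    exact TES.nonext ⟨[ai, a], si, t⟩ hne
  obtain ⟨Ss, hSlen, hSs⟩ := list_choice _ ars hchoice
  have hTES : TES N (Trail.nil t)
      ((List.zipWith (fun (ai : A) (Si : List (Trail V A)) =>
        Si.map (fun e => (⟨e.arrows ++ [ai, a], e.src, t⟩ : Trail V A))) ars Ss).flatten) := by
    have := TES.ext (g := N) (Trail.nil t) a u ars Ss
      ⟨haN, by simp [Trail.nil], u, hatN⟩ hatN harsN' hSlen ?_
    · exact this
    · intro i ai si Si hi hSi hsi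
      exact (hSs i ai Si hi hSi).2 si hsi
  refine ⟨hcons, hCf, _, hTES, ?_⟩
  intro tri htri
  rw [mem_flatten_zipWith] at htri
  obtain ⟨i, ai, Si, h1, h2, h3⟩ := htri
  obtain ⟨⟨si, hsi, hSieq⟩, _⟩ := hSs i ai Si h1 h2
  subst hSieq
  simp only [List.mem_map, List.mem_singleton] at h3
  obtain ⟨e, he, heq⟩ := h3
  subst he
  have hsig' : (ai, (si, u)) ∈ g.inc := hsi.1
  have haiArr : ai ∈ g.Arr := ((harsG.2.1 ai).mp (by
    obtain ⟨hlt, hee⟩ := List.getElem?_eq_some_iff.mp h1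
    exact hee ▸ List.getElem_mem _)).1
  exact ⟨ai, si, haiArr, hsig', src_tk hsg.1 hsig' hu, hinNe ai si hsig', heq.symm⟩

end Decoupling

/-- every construction has a decoupling decomposition, i.e. a decomposition
each of whose vertex labels is trivial or basic. -/
theorem decoupling_exists {V A L : Type*}
    (Cs : CSpace V A L) (hCs : IsCSpace Cs)
    (g : PreGraph V A L) (t : V) (hc : IsConstruction Cs g t) :
    ∃ D : DTree V A L, IsDecompositionOf Cs D g t ∧
      AllLabels (fun h s => TrivialC h s ∨ BasicC h) D := by
  have hins : ∀ c ins out, (c, (ins, out)) ∈ Cs.sig → ins ≠ [] :=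
    fun c ins out h => (hCs.2.2.2.1 c ins out h).1
  suffices H : ∀ (n : ℕ) (g : PreGraph V A L) (t : V), g.Cf.ncard ≤ n →
      IsConstruction Cs g t → ∃ D : DTree V A L, IsDecompositionOf Cs D g t ∧
        AllLabels (fun h s => TrivialC h s ∨ BasicC h) D from
    H g.Cf.ncard g t le_rfl hc
  clear hc g t
  intro n
  induction n using Nat.strong_induction_on with
  | _ n ih =>
    intro g t hn hc
    by_cases hCfE : g.Cf = ∅
    · -- the construction is trivial
      have htriv : TrivialC g t := by
        apply Set.eq_of_subset_of_subset
        · rintro v hv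
          rcases hv with hv | hv
          · obtain ⟨tr0, ⟨hnd0, hch0, _⟩, hsrc0, htgt0⟩ :=
              hc.2.2.2.2.2.2.2 v (Or.inl hv)
            cases harr : tr0.arrows with
            | nil =>
              have : tr0.src = tr0.tgt := by rw [harr] at hch0; exact hch0
              have : v = t := by rw [← hsrc0, this, htgt0]
              exact this ▸ rfl
            | cons b l =>
              exfalso
              rw [harr] at hch0
              obtain ⟨hbArr, m, hbm, _⟩ := hch0
              rcases hc.2.1.1.2.2.1 b _ _ hbm with ⟨_, h2⟩ | ⟨h2, _⟩ <;>
                exact (hCfE ▸ h2 : _ ∈ (∅ : Set V))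
          · exact absurd hv (hCfE ▸ Set.notMem_empty v)
        · rintro v (rfl : v = t)
          exact Or.inl hc.2.2.2.2.2.2.1
      refine ⟨.node g t [], IsDecompositionOf.single g t hc, ?_⟩
      exact AllLabels.node g t [] (Or.inl htriv) (fun c hc' => absurd hc' List.not_mem_nil)
    · -- find the configurator producing t
      have hsg := hc.2.1
      have htTk := hc.2.2.2.2.2.2.1
      obtain ⟨u0, hu0⟩ := Set.nonempty_iff_ne_empty.mpr hCfE
      obtain ⟨tr0, ⟨hnd0, hch0, _⟩, hsrc0, htgt0⟩ := hc.2.2.2.2.2.2.2 u0 (Or.inr hu0)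
      have harr0 : tr0.arrows ≠ [] := by
        intro hcon
        rw [hcon] at hch0
        have : tr0.src = tr0.tgt := hch0
        rw [hsrc0, htgt0] at this
        exact Set.disjoint_left.mp hsg.1.1 (this ▸ htTk) hu0
      rw [htgt0] at hch0
      obtain ⟨a, haMem, u, hat⟩ := chain_last harr0 hch0
      have haArr : a ∈ g.Arr := chain_arrows_mem hch0 a haMem
      have hu : u ∈ g.Cf := src_cf hsg.1 hat htTk
      -- generator and its TES
      obtain ⟨hgen, hbasic, trs, hTES, htrsP⟩ := generator_split hc hu haArr hat
      -- children
      have hchoice : ∀ tri ∈ trs, ∃ x : (PreGraph V A L × V) × DTree V A L,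
          (∃ Si, TES g tri Si ∧ x.1 = (trGraph g Si, tri.src)) ∧
          IsDecompositionOf Cs x.2 x.1.1 x.1.2 ∧
          AllLabels (fun h s => TrivialC h s ∨ BasicC h) x.2 := by
        intro tri htri
        obtain ⟨ai, si, haiArr, hsi, hsiTk, haia, htrieq⟩ := htrsP tri htri
        subst htrieq
        obtain ⟨Si, hSi⟩ := tes_exists hsg hc.2.2.2.2.1 ⟨[ai, a], si, t⟩ hsiTk
        have hchain : ChainIn g [ai, a] si t := ⟨haiArr, u, hsi, haArr, t, hat, rfl⟩
        obtain ⟨hchild, part2, part3⟩ :=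
          trGraph_construction hc hins hSi (by simp [haia]) hchain hsiTk htTk
        have huNot : u ∉ (trGraph g Si).Cf := by
          rintro ⟨huCf, huVs⟩
          have := part3 u hu huVs a haArr ⟨t, Or.inr hat⟩
          exact part2 a this (by simp)
        have hlt : (trGraph g Si).Cf.ncard < n := by
          have hss : (trGraph g Si).Cf ⊂ g.Cf := by
            constructor
            · exact Set.inter_subset_left
            · intro hcon
              exact huNot (hcon hu)
          exact lt_of_lt_of_le (Set.ncard_lt_ncard hss hc.2.2.2.1) hn
        obtain ⟨D, hD, hDall⟩ := ih _ hlt (trGraph g Si) si le_rfl hchild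
        exact ⟨((trGraph g Si, si), D), ⟨Si, hSi, rfl⟩, hD, hDall⟩
      obtain ⟨l, hllen, hl⟩ := list_choice _ trs hchoice
      refine ⟨.node (g.Nh u) t (l.map Prod.snd), ?_, ?_⟩
      · refine IsDecompositionOf.split g t (g.Nh u) (l.map Prod.fst) (l.map Prod.snd) hc
          ⟨hgen, restrict_subgraph _ _ _, trs, hTES, by simp [hllen], ?_⟩ (by simp) ?_
        · -- split indexed condition
          intro i tri htri
          have hi : i < l.length := by
            rw [hllen]
            obtain ⟨hlt', _⟩ := List.getElem?_eq_some_iff.mp htri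
            exact hlt'
          have hxi : l[i]? = some l[i] := List.getElem?_eq_getElem hi
          obtain ⟨⟨Si, hSi, heq⟩, _, _⟩ := hl i tri l[i] htri hxi
          refine ⟨Si, hSi, ?_⟩
          rw [List.getElem?_map, hxi]
          simp [heq]
        · -- decomposition recursion
          intro i ci gi ti hci hgi
          rw [List.getElem?_map] at hci hgi
          cases hxi : l[i]? with
          | none => rw [hxi] at hci; simp at hci
          | some x =>
            rw [hxi] at hci hgi
            simp only [Option.map_some] at hci hgi
            have hcieq : ci = x.2 := by simpa using hci.symm
            have hgieq : (gi, ti) = x.1 := by simpa using hgi.symm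
            have hi : i < l.length := (List.getElem?_eq_some_iff.mp hxi).1
            have hi' : i < trs.length := by rw [← hllen]; exact hi
            have htri : trs[i]? = some (trs[i]'hi') := List.getElem?_eq_getElem _
            obtain ⟨_, hD, _⟩ := hl i _ x htri hxi
            have h1 : gi = x.1.1 := by rw [← hgieq]
            have h2 : ti = x.1.2 := by rw [← hgieq]
            rw [hcieq, h1, h2]
            exact hD
      · refine AllLabels.node _ _ _ (Or.inr ⟨u, hbasic⟩) ?_
        intro c hcmem
        obtain ⟨x, hx, hxeq⟩ := List.mem_map.mp hcmem
        obtain ⟨i, hi, hgeti⟩ := List.getElem_of_mem hx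
        have hxi : l[i]? = some x := by rw [List.getElem?_eq_getElem hi, hgeti]
        have hi' : i < trs.length := by rw [← hllen]; exact hi
        have htri : trs[i]? = some (trs[i]'hi') := List.getElem?_eq_getElem _
        obtain ⟨_, _, hall⟩ := hl i _ x htri hxi
        exact hxeq ▸ hall

end RST
end
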